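/- arXiv:0809.3507 — 9 statements merged into one kernel-verified Lean document; each statement's English description precedes it below -/
import Mathlib

section
/- Let R be a regular local ring of dimension d dominated by a valuation ν, and let s₀ be the smallest element of S^R(ν). Then |S^R(ν) ∩ (0, n·s₀)| < C(d-1+n, d) (the binomial coefficient) for all natural numbers n. -/
attribute [local instance] Ideal.Quotient.field

attribute [local instance] Classical.propDecidable
set_option maxHeartbeats 1000000
open Finset

/-- Number of strict steps of the chain `f 0 ≤ f 1 ≤ ...` among the first `k` steps. -/
noncomputable def chainSteps {α : Type*} [Preorder α] (f : ℕ → α) (k : ℕ) : ℕ :=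
  ((Finset.range k).filter fun i => f i < f (i + 1)).card

lemma chainSteps_eq_of_strict {α : Type*} [Preorder α] (f : ℕ → α) (k : ℕ)
    (h : ∀ i < k, f i < f (i + 1)) : chainSteps f k = k := by
  unfold chainSteps
  rw [Finset.filter_true_of_mem (fun i hi => h i (Finset.mem_range.1 hi)), Finset.card_range]

lemma chainSteps_eq_zero {α : Type*} [Preorder α] (f : ℕ → α) (k : ℕ)
    (h : ∀ i, ¬ f i < f (i + 1)) : chainSteps f k = 0 := by
  unfold chainSteps
  rw [Finset.filter_false_of_mem (fun i _ => h i), Finset.card_empty]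

lemma chainSteps_le_add {α β γ : Type*} [Preorder α] [Preorder β] [Preorder γ]
    (f : ℕ → α) (g : ℕ → β) (h : ℕ → γ) (k : ℕ)
    (H : ∀ i, f i < f (i + 1) → g i < g (i + 1) ∨ h i < h (i + 1)) :
    chainSteps f k ≤ chainSteps g k + chainSteps h k := by
  unfold chainSteps
  refine le_trans (Finset.card_le_card (fun i hi => ?_)) (Finset.card_union_le _ _)
  simp only [Finset.mem_filter, Finset.mem_union, Finset.mem_range] at hi ⊢
  rcases H i hi.2 with h' | h'
  · exact Or.inl ⟨hi.1, h'⟩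
  · exact Or.inr ⟨hi.1, h'⟩

lemma chainSteps_le_of_mono {α β : Type*} [Preorder α] [Preorder β] (f : ℕ → α) (g : ℕ → β)
    (k : ℕ) (H : ∀ i, f i < f (i + 1) → g i < g (i + 1)) :
    chainSteps f k ≤ chainSteps g k := by
  exact Finset.card_le_card (fun i hi => by
    simp only [Finset.mem_filter, Finset.mem_range] at hi ⊢
    exact ⟨hi.1, H i hi.2⟩)

lemma chainSteps_le_finrank {K V : Type*} [DivisionRing K] [AddCommGroup V] [Module K V]
    [FiniteDimensional K V] (f : ℕ → Submodule K V) (hf : Monotone f) (k : ℕ) :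
    chainSteps f k ≤ Module.finrank K V := by
  have key : ∀ k, Module.finrank K (f 0) + chainSteps f k ≤ Module.finrank K (f k) := by
    intro k
    induction k with
    | zero => simp [chainSteps]
    | succ k ih =>
      unfold chainSteps at ih
      unfold chainSteps
      rw [Finset.range_add_one, Finset.filter_insert]
      by_cases hlt : f k < f (k + 1)
      · rw [if_pos hlt, Finset.card_insert_of_notMem (by simp)]
        have := Submodule.finrank_lt_finrank_of_lt hlt
        omega
      · rw [if_neg hlt]
        have hle : f k ≤ f (k + 1) := hf (Nat.le_succ k)
        have := Submodule.finrank_mono hle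
        omega
  have := key k
  have h2 := Submodule.finrank_le (f k)
  omega


section QuotPlumbing

variable {R : Type*} [CommRing R] {M : Type*} [AddCommGroup M] [Module R M] (I : Ideal R)

lemma mkq_smul' (b : R) (x : M ⧸ (I • ⊤ : Submodule R M)) :
    (Ideal.Quotient.mk I b) • x = b • x := by
  obtain ⟨y, rfl⟩ := Submodule.Quotient.mk_surjective _ x
  exact Module.Quotient.mk_smul_mk M I b y

instance : IsScalarTower R (R ⧸ I) (M ⧸ (I • ⊤ : Submodule R M)) := by
  refine ⟨fun r c x => ?_⟩
  obtain ⟨b, rfl⟩ := Ideal.Quotient.mk_surjective c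
  have h1 : r • (Ideal.Quotient.mk I b) = Ideal.Quotient.mk I (r * b) := by
    rw [Algebra.smul_def, Ideal.Quotient.algebraMap_eq, ← map_mul]
  rw [h1, mkq_smul', mkq_smul', mul_smul]

/-- Turn an `R`-submodule of `M ⧸ I•⊤` into an `R ⧸ I`-submodule (same carrier). -/
def qSub (N : Submodule R (M ⧸ (I • ⊤ : Submodule R M))) :
    Submodule (R ⧸ I) (M ⧸ (I • ⊤ : Submodule R M)) where
  carrier := N
  add_mem' := N.add_mem
  zero_mem' := N.zero_mem
  smul_mem' := by
    intro c x hx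
    obtain ⟨b, rfl⟩ := Ideal.Quotient.mk_surjective c
    rw [mkq_smul']
    exact N.smul_mem b hx

lemma mem_qSub {N : Submodule R (M ⧸ (I • ⊤ : Submodule R M))}
    {x : M ⧸ (I • ⊤ : Submodule R M)} : x ∈ qSub I N ↔ x ∈ N := Iff.rfl

lemma qSub_mono {N N' : Submodule R (M ⧸ (I • ⊤ : Submodule R M))} (h : N ≤ N') :
    qSub I N ≤ qSub I N' := fun _ hx => h hx

lemma qSub_lt {N N' : Submodule R (M ⧸ (I • ⊤ : Submodule R M))} (h : N < N') :
    qSub I N < qSub I N' := by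
  rw [SetLike.lt_iff_le_and_exists] at h ⊢
  exact ⟨qSub_mono I h.1, h.2⟩

end QuotPlumbing

section Interval
open Pointwise

variable {R : Type*} [CommRing R] [IsLocalRing R]

local notation "𝔪" => IsLocalRing.maximalIdeal R

lemma multiset_prod_mem_pow (c : Multiset R) (I : Ideal R) (hc : ∀ x ∈ c, x ∈ I) :
    c.prod ∈ I ^ (Multiset.card c) := by
  induction c using Multiset.induction_on with
  | empty => simp
  | cons a t ih =>
    rw [Multiset.prod_cons, Multiset.card_cons, pow_succ']
    exact Ideal.mul_mem_mul (hc a (Multiset.mem_cons_self a t))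
      (ih (fun x hx => hc x (Multiset.mem_cons_of_mem hx)))

/-- Chains of ideals between `𝔪^(n+1)` and `𝔪^n` have at most `multichoose d n` strict steps. -/
lemma interval_chainSteps_le (s : Finset R) (hs : Ideal.span (s : Set R) = 𝔪)
    (n : ℕ) (K : ℕ → Ideal R) (hmono : Monotone K)
    (hub : ∀ i, K i ≤ 𝔪 ^ n) (hlb : ∀ i, 𝔪 ^ (n + 1) ≤ K i) (k : ℕ) :
    chainSteps K k ≤ Nat.multichoose s.card n := by
  classical
  set W := ↥(𝔪 ^ n : Ideal R)
  set P : Submodule R W := (𝔪 : Ideal R) • ⊤ with hP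
  set κ := R ⧸ (𝔪 : Ideal R)
  -- the kernel of the quotient map is inside 𝔪^(n+1)
  have hPle : P ≤ Submodule.comap (𝔪 ^ n : Ideal R).subtype (𝔪 ^ (n + 1) : Ideal R) := by
    rw [hP]
    refine Submodule.smul_le.2 fun r hr w _ => ?_
    show ((r • w : W) : R) ∈ (𝔪 ^ (n + 1) : Ideal R)
    rw [Submodule.coe_smul, smul_eq_mul, pow_succ']
    exact Ideal.mul_mem_mul hr w.2
  -- the chain of κ-subspaces
  let φ : Ideal R → Submodule κ (W ⧸ P) := fun A =>
    qSub _ (Submodule.map P.mkQ (Submodule.comap (𝔪 ^ n : Ideal R).subtype A))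
  have hφmono : ∀ {A A' : Ideal R}, A ≤ A' → φ A ≤ φ A' := by
    intro A A' h
    exact qSub_mono _ (Submodule.map_mono (Submodule.comap_mono h))
  have hφstrict : ∀ {A A' : Ideal R}, A < A' → A' ≤ 𝔪 ^ n → 𝔪 ^ (n + 1) ≤ A → φ A < φ A' := by
    intro A A' h hub' hlb'
    refine qSub_lt _ ?_
    rw [SetLike.lt_iff_le_and_exists]
    refine ⟨Submodule.map_mono (Submodule.comap_mono h.le), ?_⟩
    obtain ⟨x, hxA', hxA⟩ := SetLike.exists_of_lt h
    refine ⟨P.mkQ ⟨x, hub' hxA'⟩, Submodule.mem_map_of_mem hxA', ?_⟩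
    rintro ⟨y, hy, hyx⟩
    apply hxA
    have : (⟨x, hub' hxA'⟩ : W) - y ∈ P := by
      rw [← Submodule.ker_mkQ P, LinearMap.mem_ker, map_sub, hyx, sub_self]
    have h2 : x - (y : R) ∈ (𝔪 ^ (n + 1) : Ideal R) := hPle this
    have h3 : x - (y : R) + (y : R) ∈ A := A.add_mem (hlb' h2) hy
    simpa using h3
  -- spanning set of W ⧸ P over κ by monomials
  let μ : Sym ↥s n → R := fun t => ((t : Multiset ↥s).map Subtype.val).prod
  have hμmem : ∀ t : Sym ↥s n, μ t ∈ (𝔪 ^ n : Ideal R) := by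
    intro t
    have h1 : ∀ x ∈ (t : Multiset ↥s).map Subtype.val, x ∈ (𝔪 : Ideal R) := by
      intro x hx
      obtain ⟨y, _, rfl⟩ := Multiset.mem_map.1 hx
      rw [← hs]
      exact Ideal.subset_span y.2
    have h2 := multiset_prod_mem_pow (R := R) _ _ h1
    rwa [Multiset.card_map, Sym.card_coe] at h2
  let gens : Finset W := Finset.univ.image (fun t : Sym ↥s n => (⟨μ t, hμmem t⟩ : W))
  let vgens : Finset (W ⧸ P) := gens.image P.mkQ
  have hcard : vgens.card ≤ Nat.multichoose s.card n := by
    refine le_trans (Finset.card_image_le) (le_trans (Finset.card_image_le) ?_)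
    rw [Finset.card_univ, Sym.card_sym_eq_multichoose, Fintype.card_coe]
  -- span over R of gens is ⊤ in W
  have hWspan : Submodule.span R (gens : Set W) = ⊤ := by
    apply Submodule.map_injective_of_injective ((𝔪 ^ n : Ideal R).injective_subtype)
    rw [Submodule.map_span, Submodule.map_subtype_top]
    apply le_antisymm
    · rw [Submodule.span_le]
      rintro x ⟨w, _, rfl⟩
      exact w.2
    · have hpow : (𝔪 ^ n : Ideal R) = Ideal.span ((s : Set R) ^ n) := by
        rw [← hs]; exact Submodule.span_pow _ _
      refine le_trans hpow.le (Ideal.span_le.2 ?_)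
      intro a ha
      obtain ⟨f, hf⟩ := Set.mem_pow.1 ha
      let l : List ↥s := List.ofFn fun i => (⟨(f i : R), (f i).2⟩ : ↥s)
      let t : Sym ↥s n := ⟨(l : Multiset ↥s), by simp [l]⟩
      have hμt : μ t = a := by
        have h1 : ((t : Multiset ↥s).map Subtype.val).prod
            = (List.map Subtype.val l).prod := by
          rw [show ((t : Multiset ↥s)) = (l : Multiset ↥s) from rfl, Multiset.map_coe,
            Multiset.prod_coe]
        have h2 : List.map Subtype.val l = List.ofFn (fun i => ((f i : R))) := by
          simp only [l, List.map_ofFn]; rfl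
        show ((t : Multiset ↥s).map Subtype.val).prod = a
        rw [h1, h2, hf]
      apply Submodule.subset_span
      refine ⟨⟨μ t, hμmem t⟩, ?_, hμt⟩
      exact Finset.mem_coe.2 (Finset.mem_image.2 ⟨t, Finset.mem_univ t, rfl⟩)
  -- span over κ of vgens is ⊤
  have hVspanR : Submodule.span R (vgens : Set (W ⧸ P)) = ⊤ := by
    rw [Finset.coe_image, ← Submodule.map_span, hWspan, Submodule.map_top, Submodule.range_mkQ]
  have hVspan : Submodule.span κ (vgens : Set (W ⧸ P)) = ⊤ := by
    apply Submodule.restrictScalars_injective R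
    rw [Submodule.restrictScalars_span R κ Ideal.Quotient.mk_surjective, hVspanR]
    rfl
  haveI : Module.Finite κ (W ⧸ P) := ⟨⟨vgens, hVspan⟩⟩
  have hfr : Module.finrank κ (W ⧸ P) ≤ Nat.multichoose s.card n := by
    refine le_trans ?_ hcard
    rw [← finrank_top κ (W ⧸ P), ← hVspan]
    exact finrank_span_finset_le_card vgens
  refine le_trans (chainSteps_le_of_mono K (fun i => φ (K i)) k ?_)
    (le_trans (chainSteps_le_finrank _ (fun i j hij => hφmono (hmono hij)) k) hfr)
  intro i hlt
  exact hφstrict hlt (hub (i + 1)) (hlb i)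


end Interval

section ChainBound

variable {R : Type*} [CommRing R] [IsLocalRing R]

local notation "𝔪" => IsLocalRing.maximalIdeal R

lemma chain_bound (s : Finset R) (hs : Ideal.span (s : Set R) = 𝔪) (n : ℕ) :
    ∀ (g : ℕ → Ideal R), Monotone g → 𝔪 ^ n ≤ g 0 → ∀ k,
      chainSteps g k ≤ ∑ j ∈ Finset.range n, Nat.multichoose s.card j := by
  induction n with
  | zero =>
    intro g hm h0 k
    have htop : ∀ i, g i = ⊤ := fun i =>
      top_unique (le_trans (by rw [pow_zero, Ideal.one_eq_top] at h0; exact h0) (hm (Nat.zero_le i)))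
    rw [chainSteps_eq_zero _ _ (fun i => by rw [htop i, htop (i + 1)]; exact lt_irrefl ⊤)]
    simp
  | succ n ih =>
    intro g hm h0 k
    have hJ := ih (fun i => g i ⊔ 𝔪 ^ n) (fun i j hij => sup_le_sup_right (hm hij) _)
      le_sup_right k
    have hK := interval_chainSteps_le s hs n (fun i => g i ⊓ 𝔪 ^ n)
      (fun i j hij => inf_le_inf_right _ (hm hij)) (fun i => inf_le_right)
      (fun i => le_inf (le_trans h0 (hm (Nat.zero_le i)))
        (Ideal.pow_le_pow_right (Nat.le_succ n))) k
    have hsplit := chainSteps_le_add g (fun i => g i ⊔ 𝔪 ^ n) (fun i => g i ⊓ 𝔪 ^ n) k ?_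
    · rw [Finset.sum_range_succ]
      omega
    · intro i hi
      by_cases hJlt : g i ⊔ 𝔪 ^ n < g (i + 1) ⊔ 𝔪 ^ n
      · exact Or.inl hJlt
      · have hab : g i ⊔ 𝔪 ^ n ≤ g (i + 1) ⊔ 𝔪 ^ n := sup_le_sup_right (hm (Nat.le_succ i)) _
        have heq : g i ⊔ 𝔪 ^ n = g (i + 1) ⊔ 𝔪 ^ n := hab.lt_or_eq.resolve_left hJlt
        exact Or.inr (inf_lt_inf_of_lt_of_sup_le_sup hi heq.ge)

end ChainBound

lemma sum_multichoose_eq (d n : ℕ) (hd : 1 ≤ d) :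
    ∑ j ∈ Finset.range n, Nat.multichoose d j = (d - 1 + n).choose d := by
  obtain ⟨e, rfl⟩ : ∃ e, d = e + 1 := ⟨d - 1, by omega⟩
  simp only [Nat.add_sub_cancel]
  induction n with
  | zero => simp [Nat.choose_eq_zero_of_lt]
  | succ n ih =>
    rw [Finset.sum_range_succ, ih, Nat.multichoose_eq]
    have h1 : e + 1 + n - 1 = e + n := by omega
    rw [h1]
    have h2 : (e + n).choose n = (e + n).choose e := by
      have := Nat.choose_symm (show n ≤ e + n by omega)
      rw [show e + n - n = e by omega] at this
      exact this.symm
    rw [h2]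
    have h3 : e + (n + 1) = (e + n) + 1 := by omega
    rw [h3, Nat.choose_succ_succ]
    simp only [Nat.succ_eq_add_one]
    omega

/-- **Corollary 2.** Let `R` be a regular local ring of dimension `d` (a Noetherian local
domain whose maximal ideal is generated by `d` elements, `d` being the Krull dimension)
dominated by a valuation `ν`, and let `s₀` be the smallest element of `S^R(ν)`.
Then `|S^R(ν) ∩ (0, n·s₀)| < (d-1+n).choose d` for all positive natural numbers `n`. -/
theorem regular_semigroup_card_lt_choose
    (R : Type*) [CommRing R] [IsDomain R] [IsLocalRing R] [IsNoetherianRing R]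
    (d : ℕ) (hdim : ringKrullDim R = d)
    (hreg : ∃ s : Finset R, s.card = d ∧ Ideal.span (s : Set R) = IsLocalRing.maximalIdeal R)
    (Γ : Type*) [AddCommGroup Γ] [LinearOrder Γ] [IsOrderedAddMonoid Γ]
    (ν : AddValuation (FractionRing R) (WithTop Γ))
    (hge : ∀ r : R, 0 ≤ ν (algebraMap R (FractionRing R) r))
    (hdom : ∀ r : R, r ∈ IsLocalRing.maximalIdeal R ↔
      0 < ν (algebraMap R (FractionRing R) r))
    (S : Set Γ)
    (hSdef : S = {γ : Γ | ∃ f : R, f ∈ IsLocalRing.maximalIdeal R ∧ f ≠ 0 ∧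
      ν (algebraMap R (FractionRing R) f) = (γ : WithTop Γ)})
    (s₀ : Γ) (hs₀S : s₀ ∈ S) (hs₀min : ∀ x ∈ S, s₀ ≤ x) :
    ∀ n : ℕ, 0 < n →
      (S ∩ Set.Ioo 0 (n • s₀)).encard < (((d - 1 + n).choose d : ℕ) : ℕ∞) := by
  classical
  intro n hn
  obtain ⟨s, hscard, hsspan⟩ := hreg
  subst hSdef
  set m : Ideal R := IsLocalRing.maximalIdeal R with hm
  obtain ⟨f₀, hf₀m, hf₀0, hf₀v⟩ := hs₀S
  -- d ≥ 1
  have hd1 : 1 ≤ d := by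
    by_contra h
    have hd0 : d = 0 := by omega
    rw [hd0, Finset.card_eq_zero] at hscard
    rw [hscard] at hsspan
    simp only [Finset.coe_empty, Ideal.span_empty] at hsspan
    rw [← hsspan] at hf₀m
    exact hf₀0 (by simpa using hf₀m)
  -- s₀ > 0
  have hs₀pos : 0 < s₀ := by
    have h := (hdom f₀).1 hf₀m
    rw [hf₀v] at h
    rw [← WithTop.coe_zero, WithTop.coe_lt_coe] at h
    exact h
  -- the valuation ideals
  let Iv : Γ → Ideal R := fun γ =>
    { carrier := {f | (γ : WithTop Γ) ≤ ν (algebraMap R (FractionRing R) f)}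
      zero_mem' := by simp [AddValuation.map_zero]
      add_mem' := fun {a b} ha hb => by
        simp only [Set.mem_setOf_eq] at *
        rw [map_add]
        exact le_trans (le_inf ha hb) (ν.map_add _ _)
      smul_mem' := fun c x hx => by
        simp only [Set.mem_setOf_eq, smul_eq_mul] at *
        rw [map_mul, ν.map_mul]
        have := add_le_add (hge c) hx
        rwa [zero_add] at this }
  have hIvmem : ∀ γ f, f ∈ Iv γ ↔ (γ : WithTop Γ) ≤ ν (algebraMap R (FractionRing R) f) :=
    fun _ _ => Iff.rfl
  have hIvanti : ∀ {γ δ : Γ}, γ ≤ δ → Iv δ ≤ Iv γ := by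
    intro γ δ h f hf
    exact le_trans (WithTop.coe_le_coe.2 h) hf
  have hIvm : ∀ {γ : Γ}, 0 < γ → Iv γ ≤ m := by
    intro γ hγ f hf
    refine (hdom f).2 (lt_of_lt_of_le ?_ hf)
    rw [← WithTop.coe_zero, WithTop.coe_lt_coe]
    exact hγ
  have hmIv : m ≤ Iv s₀ := by
    intro f hf
    rw [hIvmem]
    by_cases h : ν (algebraMap R (FractionRing R) f) = ⊤
    · rw [h]; exact le_top
    · obtain ⟨γ, hγ⟩ := WithTop.ne_top_iff_exists.1 h
      have hf0 : f ≠ 0 := by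
        rintro rfl
        rw [map_zero, AddValuation.map_zero] at h
        exact h rfl
      have hγS : s₀ ≤ γ := hs₀min γ ⟨f, hf, hf0, hγ.symm⟩
      rw [← hγ]
      exact WithTop.coe_le_coe.2 hγS
  have hpowIv : ∀ k : ℕ, m ^ k ≤ Iv (k • s₀) := by
    intro k
    induction k with
    | zero =>
      rw [pow_zero, Ideal.one_eq_top, zero_smul]
      intro f _
      rw [hIvmem, WithTop.coe_zero]
      exact hge f
    | succ k ih =>
      rw [pow_succ']
      refine Ideal.mul_le.2 fun a ha b hb => ?_
      have ha' := hmIv ha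
      have hb' := ih hb
      rw [hIvmem] at ha' hb' ⊢
      rw [map_mul, ν.map_mul]
      have hsm : ((k + 1) • s₀ : Γ) = s₀ + k • s₀ := by rw [succ_nsmul, add_comm]
      rw [hsm, WithTop.coe_add]
      exact add_le_add ha' hb'
  have hIvlt : ∀ {γ δ : Γ},
      γ ∈ {γ : Γ | ∃ f : R, f ∈ m ∧ f ≠ 0 ∧
        ν (algebraMap R (FractionRing R) f) = (γ : WithTop Γ)} → γ < δ → Iv δ < Iv γ := by
    intro γ δ hγ hγδ
    obtain ⟨f, hfm, hf0, hfv⟩ := hγ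
    rw [SetLike.lt_iff_le_and_exists]
    refine ⟨hIvanti hγδ.le, f, ?_, ?_⟩
    · rw [hIvmem, hfv]
    · rw [hIvmem, hfv, WithTop.coe_le_coe]
      exact fun h => absurd hγδ (not_lt.2 h)
  set T : Set Γ := {γ : Γ | ∃ f : R, f ∈ m ∧ f ≠ 0 ∧
    ν (algebraMap R (FractionRing R) f) = (γ : WithTop Γ)} ∩ Set.Ioo 0 (n • s₀) with hT
  set C : ℕ := (d - 1 + n).choose d with hC
  -- every finite subset of T has fewer than C elements
  have key : ∀ F : Finset Γ, ↑F ⊆ T → F.card < C := by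
    intro F hF
    set c := F.card with hc
    let e := F.orderIsoOfFin rfl
    let γs : ℕ → Γ := fun j => if h2 : j < c then (e ⟨j, h2⟩ : Γ) else n • s₀
    have hγsT : ∀ j, j < c → γs j ∈ T := by
      intro j hj
      have := hF (e ⟨j, hj⟩).2
      simpa [γs, dif_pos hj] using this
    let g : ℕ → Ideal R := fun i => if i ≤ c then Iv (γs (c - i)) else ⊤
    have hstrict : ∀ i < c + 1, g i < g (i + 1) := by
      intro i hi
      have hic : i ≤ c := by omega
      by_cases hlt : i < c
      · -- both sides are valuation ideals
        have h1 : g i = Iv (γs (c - i)) := if_pos hic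
        have h2 : g (i + 1) = Iv (γs (c - i - 1)) := by
          have : i + 1 ≤ c := by omega
          simp only [g, if_pos this]
          congr 1
        have hidx : c - i - 1 < c := by omega
        have hmemT := hγsT _ hidx
        have hlt2 : γs (c - i - 1) < γs (c - i) := by
          by_cases h0 : i = 0
          · subst h0
            have : γs c = n • s₀ := dif_neg (lt_irrefl c)
            rw [Nat.sub_zero, this]
            exact (hmemT.2).2
          · have hidx2 : c - i < c := by omega
            simp only [γs]
            rw [dif_pos hidx, dif_pos hidx2]
            have : (⟨c - i - 1, hidx⟩ : Fin c) < ⟨c - i, hidx2⟩ := by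
              simp [Fin.lt_def]; omega
            exact Subtype.coe_lt_coe.2 (e.lt_iff_lt.2 this)
        rw [h1, h2]
        exact hIvlt hmemT.1 hlt2
      · -- i = c : top step
        have hieq : i = c := by omega
        have h1 : g i = Iv (γs 0) := by
          simp only [g, if_pos hic]
          rw [hieq, Nat.sub_self]
        have h2 : g (i + 1) = ⊤ := if_neg (by omega)
        have hpos : 0 < γs 0 := by
          by_cases h0 : 0 < c
          · exact ((hγsT 0 h0).2).1
          · have hns : γs 0 = n • s₀ := dif_neg (by omega)
            rw [hns]
            exact nsmul_pos hs₀pos (by omega)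
        rw [h1, h2]
        exact lt_of_le_of_lt (hIvm hpos)
          (lt_top_iff_ne_top.2 (IsLocalRing.maximalIdeal.isMaximal R).ne_top)
    have hmono : Monotone g := by
      refine monotone_nat_of_le_succ fun i => ?_
      by_cases h : i < c + 1
      · exact (hstrict i h).le
      · have h1 : g i = ⊤ := if_neg (by omega)
        have h2 : g (i + 1) = ⊤ := if_neg (by omega)
        rw [h1, h2]
    have hbot : m ^ n ≤ g 0 := by
      have h1 : g 0 = Iv (γs c) := if_pos (Nat.zero_le c)
      have h2 : γs c = n • s₀ := dif_neg (lt_irrefl c)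
      rw [h1, h2]
      exact hpowIv n
    have hchain := chain_bound s hsspan n g hmono hbot (c + 1)
    rw [chainSteps_eq_of_strict g (c + 1) hstrict] at hchain
    rw [sum_multichoose_eq _ _ (hscard ▸ hd1), hscard] at hchain
    omega
  -- conclude
  have hfin : T.Finite := by
    by_contra hinf
    have hinf' : T.Infinite := hinf
    obtain ⟨F, hFsub, hFcard⟩ := hinf'.exists_subset_card_eq C
    have := key F hFsub
    omega
  have hgoal : T.encard < (C : ℕ∞) := by
    rw [hfin.encard_eq_coe_toFinset_card]
    have := key hfin.toFinset (by simp)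
    exact_mod_cast this
  exact hgoal
end

section
/- There exists a well-ordered subsemigroup U of the positive rationals, of ordinal type ω, such that U is not equal to S^R(ν) for any valuation ν dominating any Noetherian local domain R. -/
open Submodule IsLocalRing Pointwise

attribute [local instance] Ideal.Quotient.field

section QuotSmul

variable {R : Type*} [CommRing R] (I : Ideal R) {M : Type*} [AddCommGroup M] [Module R M]
  [Module (R ⧸ I) M] [IsScalarTower R (R ⧸ I) M]

theorem quot_mk_smul (r : R) (x : M) : (Ideal.Quotient.mk I r) • x = r • x := by
  rw [← Ideal.Quotient.algebraMap_eq, Algebra.algebraMap_eq_smul_one, smul_assoc, one_smul]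

/-- Turn an `R`-submodule of an `R ⧸ I`-module into an `R ⧸ I`-submodule. -/
def toQuotSub (p : Submodule R M) : Submodule (R ⧸ I) M where
  carrier := p
  add_mem' := fun h h' => p.add_mem h h'
  zero_mem' := p.zero_mem
  smul_mem' := by
    intro c x hx
    obtain ⟨r, rfl⟩ := Ideal.Quotient.mk_surjective c
    rw [quot_mk_smul]
    exact p.smul_mem r hx

@[simp] lemma mem_toQuotSub {p : Submodule R M} {x : M} : x ∈ toQuotSub I p ↔ x ∈ p := Iff.rfl

lemma toQuotSub_le {p q : Submodule R M} (h : p ≤ q) : toQuotSub I p ≤ toQuotSub I q := h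

lemma toQuotSub_inj {p q : Submodule R M} (h : toQuotSub I p = toQuotSub I q) : p = q := by
  ext x
  exact SetLike.ext_iff.mp h x

end QuotSmul

section Chain

variable (R : Type) [CommRing R] [IsLocalRing R] [IsNoetherianRing R]

/-- `m^i` as a module. -/
abbrev Mi (i : ℕ) : Type := ↥(maximalIdeal R ^ i)

/-- `m^i / m·m^i`, a vector space over the residue field. -/
abbrev Qi (i : ℕ) : Type :=
  Mi R i ⧸ ((maximalIdeal R) • (⊤ : Submodule R (Mi R i)))

noncomputable example (i : ℕ) : Module (R ⧸ maximalIdeal R) (Qi R i) := inferInstance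

instance Qi.isScalarTower (i : ℕ) : IsScalarTower R (R ⧸ maximalIdeal R) (Qi R i) :=
  Module.IsTorsionBySet.isScalarTower _

instance Mi.finite (i : ℕ) : Module.Finite R (Mi R i) :=
  Module.Finite.iff_fg.mpr (IsNoetherian.noetherian _)

instance Qi.finiteR (i : ℕ) : Module.Finite R (Qi R i) := Module.Finite.quotient R _

instance Qi.finite (i : ℕ) : Module.Finite (R ⧸ maximalIdeal R) (Qi R i) :=
  Module.Finite.of_restrictScalars_finite R _ _

/-- The subspace of `Qi` determined by an ideal `I`. -/
noncomputable def subAt (i : ℕ) (I : Ideal R) :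
    Submodule (R ⧸ maximalIdeal R) (Qi R i) :=
  toQuotSub _ (Submodule.map (Submodule.mkQ _)
    (Submodule.comap (maximalIdeal R ^ i).subtype (I ⊓ maximalIdeal R ^ i)))

lemma subAt_mono (i : ℕ) {I J : Ideal R} (h : I ≤ J) : subAt R i I ≤ subAt R i J :=
  toQuotSub_le _ (Submodule.map_mono (Submodule.comap_mono (inf_le_inf_right _ h)))

lemma subAt_eq_imp (i : ℕ) {I J : Ideal R} (h : subAt R i I = subAt R i J) :
    (I ⊓ maximalIdeal R ^ i) ⊔ maximalIdeal R ^ (i + 1)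
      = (J ⊓ maximalIdeal R ^ i) ⊔ maximalIdeal R ^ (i + 1) := by
  have h2 := toQuotSub_inj _ h
  -- comap the quotient map
  have h3 := congrArg (Submodule.comap
      (Submodule.mkQ ((maximalIdeal R) • (⊤ : Submodule R (Mi R i))))) h2
  rw [Submodule.comap_map_eq, Submodule.comap_map_eq, Submodule.ker_mkQ] at h3
  have h4 := congrArg (Submodule.map (maximalIdeal R ^ i).subtype) h3
  rw [Submodule.map_sup, Submodule.map_sup, Submodule.map_comap_subtype,
    Submodule.map_comap_subtype, Submodule.map_smul'', Submodule.map_top,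
    Submodule.range_subtype, Ideal.smul_eq_mul, ← pow_succ'] at h4
  rw [inf_eq_right.mpr inf_le_right, inf_eq_right.mpr inf_le_right] at h4
  exact h4

end Chain

section Chain2

variable {R : Type} [CommRing R] [IsLocalRing R] [IsNoetherianRing R]

set_option linter.unusedSectionVars false

lemma le_of_graded_eq {n : ℕ} {I J : Ideal R} (hIJ : I ≤ J) (hI : maximalIdeal R ^ n ≤ I)
    (heq : ∀ i < n, (I ⊓ maximalIdeal R ^ i) ⊔ maximalIdeal R ^ (i + 1)
      = (J ⊓ maximalIdeal R ^ i) ⊔ maximalIdeal R ^ (i + 1)) : J ≤ I := by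
  have key : ∀ i, i ≤ n → J ≤ I ⊔ (J ⊓ maximalIdeal R ^ i) := by
    intro i
    induction i with
    | zero =>
      intro _
      rw [pow_zero, Ideal.one_eq_top, inf_top_eq]
      exact le_sup_right
    | succ i ih =>
      intro hin
      have hi : i < n := hin
      have step : J ⊓ maximalIdeal R ^ i ≤ (I ⊓ maximalIdeal R ^ i) ⊔ (J ⊓ maximalIdeal R ^ (i + 1)) := by
        have h1 : J ⊓ maximalIdeal R ^ i
            ≤ ((I ⊓ maximalIdeal R ^ i) ⊔ maximalIdeal R ^ (i + 1)) ⊓ (J ⊓ maximalIdeal R ^ i) := by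
          refine le_inf ?_ le_rfl
          rw [heq i hi]
          exact le_sup_left
        have h2 : ((I ⊓ maximalIdeal R ^ i) ⊔ maximalIdeal R ^ (i + 1)) ⊓ (J ⊓ maximalIdeal R ^ i)
            = (I ⊓ maximalIdeal R ^ i) ⊔ (maximalIdeal R ^ (i + 1) ⊓ (J ⊓ maximalIdeal R ^ i)) :=
          sup_inf_assoc_of_le _ (inf_le_inf_right _ hIJ)
        have h3 : maximalIdeal R ^ (i + 1) ⊓ (J ⊓ maximalIdeal R ^ i) ≤ J ⊓ maximalIdeal R ^ (i + 1) :=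
          le_inf (le_trans inf_le_right inf_le_left) inf_le_left
        calc J ⊓ maximalIdeal R ^ i
            ≤ (I ⊓ maximalIdeal R ^ i) ⊔ (maximalIdeal R ^ (i + 1) ⊓ (J ⊓ maximalIdeal R ^ i)) :=
              h2 ▸ h1
          _ ≤ (I ⊓ maximalIdeal R ^ i) ⊔ (J ⊓ maximalIdeal R ^ (i + 1)) := sup_le_sup_left h3 _
      calc J ≤ I ⊔ (J ⊓ maximalIdeal R ^ i) := ih (le_of_lt hi)
        _ ≤ I ⊔ ((I ⊓ maximalIdeal R ^ i) ⊔ (J ⊓ maximalIdeal R ^ (i + 1))) := sup_le_sup_left step _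
        _ ≤ I ⊔ (J ⊓ maximalIdeal R ^ (i + 1)) := by
            rw [← sup_assoc]
            exact sup_le_sup_right (sup_le le_rfl inf_le_left) _
  have := key n le_rfl
  refine le_trans this (sup_le le_rfl (le_trans inf_le_right hI))

lemma exists_subAt_lt {n : ℕ} {I J : Ideal R} (hIJ : I < J) (hI : maximalIdeal R ^ n ≤ I) :
    ∃ i < n, subAt R i I < subAt R i J := by
  by_contra hcon
  push_neg at hcon
  have heq : ∀ i < n, subAt R i I = subAt R i J := fun i hi =>
    ((subAt_mono R i hIJ.le).lt_or_eq).resolve_left (hcon i hi)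
  exact (lt_iff_le_not_ge.1 hIJ).2 (le_of_graded_eq hIJ.le hI fun i hi => subAt_eq_imp R i (heq i hi))

/-- The numerical invariant: sum of dimensions of the graded pieces. -/
noncomputable def hFun (n : ℕ) (I : Ideal R) : ℕ :=
  ∑ i ∈ Finset.range n, Module.finrank (R ⧸ maximalIdeal R) ↥(subAt R i I)

lemma hFun_lt {n : ℕ} {I J : Ideal R} (hIJ : I < J) (hI : maximalIdeal R ^ n ≤ I) :
    hFun n I < hFun n J := by
  obtain ⟨i0, hi0, hlt⟩ := exists_subAt_lt hIJ hI
  refine Finset.sum_lt_sum (fun i _ => ?_) ⟨i0, Finset.mem_range.mpr hi0, ?_⟩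
  · exact Submodule.finrank_mono (subAt_mono R i hIJ.le)
  · exact Submodule.finrank_lt_finrank_of_lt hlt

end Chain2

section Dim

variable {R : Type} [CommRing R] [IsLocalRing R] [IsNoetherianRing R]

set_option linter.unusedSectionVars false

lemma finrank_Qi_le (G : Finset R) (hG : Ideal.span (G : Set R) = maximalIdeal R) (i : ℕ) :
    Module.finrank (R ⧸ maximalIdeal R) (Qi R i) ≤ G.card ^ i := by
  classical
  set s : Set R := (G : Set R) with hs
  -- the products of `i` elements of `G` span `m ^ i`
  have hspan : Ideal.span (s ^ i) = maximalIdeal R ^ i := by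
    rw [← hG]
    exact (Submodule.span_pow s i).symm
  -- the function picking products
  have hmem : ∀ f : Fin i → s, (∏ j, (f j : R)) ∈ maximalIdeal R ^ i := by
    intro f
    rw [← hspan]
    refine Ideal.subset_span ?_
    rw [Set.mem_pow]
    exact ⟨f, by rw [List.prod_ofFn]⟩
  let F0 : (Fin i → s) → Mi R i := fun f => ⟨∏ j, (f j : R), hmem f⟩
  -- F0 spans Mi R i over R
  have hspan0 : Submodule.span R (Set.range F0) = ⊤ := by
    apply Submodule.map_injective_of_injective (Submodule.injective_subtype (maximalIdeal R ^ i))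
    rw [Submodule.map_span, Submodule.map_top, Submodule.range_subtype]
    have : Submodule.subtype (maximalIdeal R ^ i) '' Set.range F0 = s ^ i := by
      ext x
      constructor
      · rintro ⟨y, ⟨f, rfl⟩, rfl⟩
        rw [Set.mem_pow]
        exact ⟨f, by rw [List.prod_ofFn]; rfl⟩
      · intro hx
        rw [Set.mem_pow] at hx
        obtain ⟨f, hf⟩ := hx
        rw [List.prod_ofFn] at hf
        exact ⟨F0 f, ⟨f, rfl⟩, hf⟩
    rw [this, ← hspan, Ideal.span]
  -- push to Qi
  let F : (Fin i → s) → Qi R i := fun f =>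
    Submodule.mkQ ((maximalIdeal R) • (⊤ : Submodule R (Mi R i))) (F0 f)
  have hspan1 : Submodule.span R (Set.range F) = ⊤ := by
    have : Set.range F = Submodule.mkQ ((maximalIdeal R) • (⊤ : Submodule R (Mi R i))) ''
        Set.range F0 := by
      rw [← Set.range_comp]; rfl
    rw [this, ← Submodule.map_span, hspan0, Submodule.map_top, Submodule.range_mkQ]
  have hspan2 : Submodule.span (R ⧸ maximalIdeal R) (Set.range F) = ⊤ := by
    have h := Submodule.span_le_restrictScalars R (R ⧸ maximalIdeal R) (Set.range F)
    rw [hspan1] at h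
    rw [eq_top_iff]
    intro x _
    exact h Submodule.mem_top
  -- conclude
  haveI : Fintype s := FinsetCoe.fintype G
  calc Module.finrank (R ⧸ maximalIdeal R) (Qi R i)
      = Module.finrank (R ⧸ maximalIdeal R)
        ↥(Submodule.span (R ⧸ maximalIdeal R) (Set.range F)) := by rw [hspan2, finrank_top]
    _ ≤ Fintype.card (Fin i → s) := finrank_range_le_card F
    _ = G.card ^ i := by
        rw [Fintype.card_fun, Fintype.card_fin]
        congr 1
        rw [← Fintype.card_coe G]
        exact Fintype.card_congr (Equiv.subtypeEquivRight fun x => Finset.mem_coe)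

lemma hFun_le (G : Finset R) (hG : Ideal.span (G : Set R) = maximalIdeal R) (n : ℕ)
    (I : Ideal R) : hFun n I ≤ ∑ i ∈ Finset.range n, G.card ^ i := by
  refine Finset.sum_le_sum fun i _ => ?_
  exact le_trans (Submodule.finrank_le _) (finrank_Qi_le G hG i)

end Dim

section Counting

open WithTop

lemma counting (R : Type) [CommRing R] [IsLocalRing R] [IsNoetherianRing R]
    (w : R → WithTop ℚ)
    (hw0 : ∀ r : R, 0 ≤ w r) (hwz : w 0 = ⊤)
    (hwmul : ∀ a b : R, w (a * b) = w a + w b)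
    (hwadd : ∀ a b : R, min (w a) (w b) ≤ w (a + b))
    (hw1 : ∀ f ∈ maximalIdeal R, (1 : WithTop ℚ) ≤ w f)
    (G : Finset R) (hG : Ideal.span (G : Set R) = maximalIdeal R)
    (n : ℕ)
    (A : Finset ℚ) (hA : ∀ γ ∈ A, γ < (n : ℚ) ∧ ∃ f ∈ maximalIdeal R, w f = (γ : WithTop ℚ)) :
    A.card ≤ (∑ i ∈ Finset.range n, G.card ^ i) + 1 := by
  classical
  -- the valuation ideals
  let Iv : ℚ → Ideal R := fun γ =>
    { carrier := {f : R | (γ : WithTop ℚ) ≤ w f}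
      add_mem' := fun {a b} ha hb => le_trans (le_min ha hb) (hwadd a b)
      zero_mem' := by simp only [Set.mem_setOf_eq, hwz, le_top]
      smul_mem' := by
        intro c x hx
        simp only [Set.mem_setOf_eq, smul_eq_mul, hwmul]
        exact le_trans hx (le_add_of_nonneg_left (hw0 c)) }
  have hIv_mem : ∀ (γ : ℚ) (f : R), f ∈ Iv γ ↔ (γ : WithTop ℚ) ≤ w f := fun _ _ => Iff.rfl
  -- powers of the maximal ideal have large value
  have hpow : ∀ k : ℕ, ∀ f ∈ maximalIdeal R ^ k, ((k : ℚ) : WithTop ℚ) ≤ w f := by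
    intro k
    induction k with
    | zero => intro f _; simpa using hw0 f
    | succ k ih =>
      have : maximalIdeal R ^ (k + 1) ≤ Iv ((k : ℚ) + 1) := by
        rw [pow_succ]
        refine Ideal.mul_le.mpr fun r hr s hs => ?_
        rw [hIv_mem, hwmul]
        push_cast
        exact add_le_add (by exact_mod_cast ih r hr) (hw1 s hs)
      intro f hf
      have h2 := this hf
      rw [hIv_mem] at h2
      exact_mod_cast h2
  -- m^n is contained in each Iv γ for γ < n
  have hmn : ∀ γ : ℚ, γ < (n : ℚ) → maximalIdeal R ^ n ≤ Iv γ := by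
    intro γ hγ f hf
    rw [hIv_mem]
    refine le_trans ?_ (hpow n f hf)
    exact_mod_cast le_of_lt hγ
  -- strict antitonicity on A
  have hstrict : ∀ γ ∈ A, ∀ δ ∈ A, γ < δ → Iv δ < Iv γ := by
    intro γ hγ δ hδ hlt
    obtain ⟨-, f, hfm, hfv⟩ := hA γ hγ
    have hle : Iv δ ≤ Iv γ := fun x hx =>
      le_trans (show ((γ : ℚ) : WithTop ℚ) ≤ ((δ : ℚ) : WithTop ℚ) from by exact_mod_cast hlt.le) hx
    refine lt_of_le_of_ne hle fun heqq => ?_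
    have hfγ : f ∈ Iv γ := by rw [hIv_mem, hfv]
    rw [← heqq, hIv_mem, hfv] at hfγ
    exact absurd (by exact_mod_cast hfγ) (not_le.mpr hlt)
  -- the injection into Finset.range (B + 1)
  have hB : ∀ γ : ℚ, hFun n (Iv γ) ≤ ∑ i ∈ Finset.range n, G.card ^ i :=
    fun γ => hFun_le G hG n (Iv γ)
  have hinj : Set.InjOn (fun γ => hFun n (Iv γ)) ↑A := by
    intro γ hγ δ hδ hfe
    by_contra hne
    rcases lt_or_gt_of_ne hne with h | h
    · have h1 := hFun_lt (hstrict γ hγ δ hδ h) (hmn δ (hA δ hδ).1)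
      exact absurd hfe h1.ne'
    · have h1 := hFun_lt (hstrict δ hδ γ hγ h) (hmn γ (hA γ hγ).1)
      exact absurd hfe h1.ne
  have hcard := Finset.card_le_card_of_injOn
    (t := Finset.range ((∑ i ∈ Finset.range n, G.card ^ i) + 1))
    (fun γ => hFun n (Iv γ))
    (fun γ _ => Finset.mem_range.mpr (Nat.lt_succ_of_le (hB γ))) hinj
  simpa using hcard

end Counting

section USet

/-- The superexponentially-fine semigroup. -/
def Uset : Set ℚ := {q : ℚ | 1 ≤ q ∧ ∃ z : ℤ, q * 2 ^ (⌈q⌉₊ ^ ⌈q⌉₊) = (z : ℚ)}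

lemma Uset_pow_le {x y : ℚ} (hx : 1 ≤ x) (hxy : x ≤ y) :
    ⌈x⌉₊ ^ ⌈x⌉₊ ≤ ⌈y⌉₊ ^ ⌈y⌉₊ := by
  have h1 : ⌈x⌉₊ ≤ ⌈y⌉₊ := Nat.ceil_mono hxy
  have hc1 : 1 ≤ ⌈y⌉₊ := Nat.ceil_pos.mpr (by linarith)
  calc ⌈x⌉₊ ^ ⌈x⌉₊ ≤ ⌈y⌉₊ ^ ⌈x⌉₊ := Nat.pow_le_pow_left h1 _
    _ ≤ ⌈y⌉₊ ^ ⌈y⌉₊ := Nat.pow_le_pow_right hc1 h1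

lemma Uset_add {x y : ℚ} (hx : x ∈ Uset) (hy : y ∈ Uset) : x + y ∈ Uset := by
  obtain ⟨hx1, zx, hzx⟩ := hx
  obtain ⟨hy1, zy, hzy⟩ := hy
  have hxy1 : (1:ℚ) ≤ x + y := by linarith
  refine ⟨hxy1, ?_⟩
  have hax : ⌈x⌉₊ ^ ⌈x⌉₊ ≤ ⌈x+y⌉₊ ^ ⌈x+y⌉₊ := Uset_pow_le hx1 (by linarith)
  have hay : ⌈y⌉₊ ^ ⌈y⌉₊ ≤ ⌈x+y⌉₊ ^ ⌈x+y⌉₊ := Uset_pow_le hy1 (by linarith)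
  refine ⟨zx * 2 ^ (⌈x+y⌉₊ ^ ⌈x+y⌉₊ - ⌈x⌉₊ ^ ⌈x⌉₊)
      + zy * 2 ^ (⌈x+y⌉₊ ^ ⌈x+y⌉₊ - ⌈y⌉₊ ^ ⌈y⌉₊), ?_⟩
  have ex : (2:ℚ) ^ (⌈x+y⌉₊ ^ ⌈x+y⌉₊)
      = 2 ^ (⌈x⌉₊ ^ ⌈x⌉₊) * 2 ^ (⌈x+y⌉₊ ^ ⌈x+y⌉₊ - ⌈x⌉₊ ^ ⌈x⌉₊) := by
    rw [← pow_add, Nat.add_sub_cancel' hax]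
  have ey : (2:ℚ) ^ (⌈x+y⌉₊ ^ ⌈x+y⌉₊)
      = 2 ^ (⌈y⌉₊ ^ ⌈y⌉₊) * 2 ^ (⌈x+y⌉₊ ^ ⌈x+y⌉₊ - ⌈y⌉₊ ^ ⌈y⌉₊) := by
    rw [← pow_add, Nat.add_sub_cancel' hay]
  have hx2 : x * 2 ^ (⌈x+y⌉₊ ^ ⌈x+y⌉₊)
      = (zx:ℚ) * 2 ^ (⌈x+y⌉₊ ^ ⌈x+y⌉₊ - ⌈x⌉₊ ^ ⌈x⌉₊) := by
    rw [ex, ← mul_assoc, hzx]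
  have hy2 : y * 2 ^ (⌈x+y⌉₊ ^ ⌈x+y⌉₊)
      = (zy:ℚ) * 2 ^ (⌈x+y⌉₊ ^ ⌈x+y⌉₊ - ⌈y⌉₊ ^ ⌈y⌉₊) := by
    rw [ey, ← mul_assoc, hzy]
  push_cast
  rw [add_mul, hx2, hy2]

lemma Uset_nat {k : ℕ} (hk : 1 ≤ k) : (k : ℚ) ∈ Uset := by
  refine ⟨by exact_mod_cast hk, (k : ℤ) * 2 ^ (k ^ k), ?_⟩
  rw [Nat.ceil_natCast]
  push_cast
  ring

lemma Uset_infinite : Uset.Infinite := by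
  refine Set.infinite_of_injective_forall_mem (f := fun j : ℕ => ((j + 1 : ℕ) : ℚ)) ?_ ?_
  · intro a b h
    simpa using h
  · intro j
    exact Uset_nat (Nat.le_add_left 1 j)

lemma Uset_Iio_finite (x : ℚ) : (Uset ∩ Set.Iio x).Finite := by
  set E := ⌈x⌉₊ ^ ⌈x⌉₊ with hE
  apply Set.Finite.subset ((Set.finite_Icc (0:ℤ) ⌈x * 2 ^ E⌉).image (fun z : ℤ => (z : ℚ) / 2 ^ E))
  rintro q ⟨⟨hq1, z, hz⟩, hqx⟩
  have hqx' : q < x := hqx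
  have hqE : ⌈q⌉₊ ^ ⌈q⌉₊ ≤ E := Uset_pow_le hq1 hqx'.le
  have h2 : (0:ℚ) < 2 ^ E := by positivity
  have hq2E : q * 2 ^ E = ((z * 2 ^ (E - ⌈q⌉₊ ^ ⌈q⌉₊) : ℤ) : ℚ) := by
    have : (2:ℚ) ^ E = 2 ^ (⌈q⌉₊ ^ ⌈q⌉₊) * 2 ^ (E - ⌈q⌉₊ ^ ⌈q⌉₊) := by
      rw [← pow_add, Nat.add_sub_cancel' hqE]
    push_cast
    rw [this, ← mul_assoc, hz]
  refine ⟨z * 2 ^ (E - ⌈q⌉₊ ^ ⌈q⌉₊), ⟨?_, ?_⟩, ?_⟩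
  · have : (0:ℚ) < q * 2 ^ E := by positivity
    rw [hq2E] at this
    exact_mod_cast this.le
  · have h3 : q * 2 ^ E ≤ x * 2 ^ E := by
      have := hqx'.le
      nlinarith
    rw [hq2E] at h3
    have := le_trans h3 (Int.le_ceil (x * 2 ^ E))
    exact_mod_cast this
  · show ((z * 2 ^ (E - ⌈q⌉₊ ^ ⌈q⌉₊) : ℤ) : ℚ) / 2 ^ E = q
    rw [div_eq_iff h2.ne', ← hq2E, mul_comm]

lemma Uset_slice {k : ℕ} (hk : 2 ≤ k) {j : ℕ} (hj : j < 2 ^ (k ^ k)) :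
    ((k:ℚ) - 1 + ((j:ℚ) + 1) / 2 ^ (k ^ k)) ∈ Uset
      ∧ ((k:ℚ) - 1 + ((j:ℚ) + 1) / 2 ^ (k ^ k)) < (k : ℚ) + 1 := by
  have h2 : (0:ℚ) < 2 ^ (k ^ k) := by positivity
  set q : ℚ := (k:ℚ) - 1 + ((j:ℚ) + 1) / 2 ^ (k ^ k) with hqdef
  have hfrac0 : (0:ℚ) < ((j:ℚ) + 1) / 2 ^ (k ^ k) := by positivity
  have hfrac1 : ((j:ℚ) + 1) / 2 ^ (k ^ k) ≤ 1 := by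
    rw [div_le_one h2]
    have : (j:ℚ) + 1 ≤ ((2:ℚ)) ^ (k ^ k) := by
      have : (j + 1 : ℕ) ≤ 2 ^ (k ^ k) := hj
      exact_mod_cast this
    exact this
  have hq1 : (1:ℚ) ≤ q := by
    have : (2:ℚ) ≤ (k:ℚ) := by exact_mod_cast hk
    rw [hqdef]; linarith
  have hqk : q ≤ (k:ℚ) := by rw [hqdef]; linarith
  have hceil : ⌈q⌉₊ = k := by
    rw [Nat.ceil_eq_iff (by omega)]
    constructor
    · have hcast : ((k - 1 : ℕ) : ℚ) = (k:ℚ) - 1 := by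
        have : (1:ℕ) ≤ k := by omega
        push_cast [Nat.cast_sub this]
        ring
      rw [hcast, hqdef]; linarith
    · exact hqk
  refine ⟨⟨hq1, ((k:ℤ) - 1) * 2 ^ (k ^ k) + ((j:ℤ) + 1), ?_⟩, by linarith⟩
  rw [hceil, hqdef]
  push_cast
  field_simp

end USet

section NatArith

lemma geom_bound (a : ℕ) : ∀ n : ℕ, (∑ i ∈ Finset.range n, a ^ i) + 1 ≤ (a + 2) ^ n := by
  intro n
  induction n with
  | zero => simp
  | succ n ih =>
    rw [Finset.sum_range_succ, pow_succ]
    have h1 : a ^ n ≤ (a + 2) ^ n := Nat.pow_le_pow_left (by omega) n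
    have h2 : 1 ≤ (a + 2) ^ n := Nat.one_le_pow _ _ (by omega)
    nlinarith

lemma pow_lt_two_pow (a n : ℕ) (hn : n ≠ 0) : (a + 2) ^ n < 2 ^ ((a + 2) * n) := by
  have h1 : a + 2 < 2 ^ (a + 2) := Nat.lt_two_pow_self
  calc (a + 2) ^ n < (2 ^ (a + 2)) ^ n := Nat.pow_lt_pow_left h1 hn
    _ = 2 ^ ((a + 2) * n) := by rw [← pow_mul]

end NatArith

/-- **Corollary 3.** There exists a well ordered subsemigroup `U` of `ℚ₊` of ordinal type `ω`
(i.e. `U` is infinite and every initial segment of `U` is finite) such that `U ≠ S^R(ν)` for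
any valuation `ν` dominating a Noetherian local domain `R`. -/
theorem exists_semigroup_not_value_semigroup :
    ∃ U : Set ℚ,
      U ⊆ Set.Ioi 0 ∧
      (∀ x ∈ U, ∀ y ∈ U, x + y ∈ U) ∧
      U.Infinite ∧
      (∀ x : ℚ, (U ∩ Set.Iio x).Finite) ∧
      ∀ (R : Type) (_ : CommRing R) (_ : IsDomain R) (_ : IsLocalRing R)
        (_ : IsNoetherianRing R)
        (ν : AddValuation (FractionRing R) (WithTop ℚ)),
        (∀ r : R, 0 ≤ ν (algebraMap R (FractionRing R) r)) →
        (∀ r : R, r ∈ IsLocalRing.maximalIdeal R ↔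
          0 < ν (algebraMap R (FractionRing R) r)) →
        {γ : ℚ | ∃ f : R, f ∈ IsLocalRing.maximalIdeal R ∧ f ≠ 0 ∧
          ν (algebraMap R (FractionRing R) f) = (γ : WithTop ℚ)} ≠ U := by
  refine ⟨Uset, ?_, ?_, Uset_infinite, Uset_Iio_finite, ?_⟩
  · intro q hq
    exact Set.mem_Ioi.mpr (by have := hq.1; linarith)
  · exact fun x hx y hy => Uset_add hx hy
  intro R cR dR lR nR ν hν0 hνm hSU
  set w : R → WithTop ℚ := fun r => ν (algebraMap R (FractionRing R) r) with hwdef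
  have hwz : w 0 = ⊤ := by
    show ν (algebraMap R (FractionRing R) 0) = ⊤
    rw [map_zero]
    exact ν.map_zero
  have hwmul : ∀ a b : R, w (a * b) = w a + w b := by
    intro a b
    show ν (algebraMap R (FractionRing R) (a * b)) = _
    rw [map_mul]
    exact ν.map_mul _ _
  have hwadd : ∀ a b : R, min (w a) (w b) ≤ w (a + b) := by
    intro a b
    show _ ≤ ν (algebraMap R (FractionRing R) (a + b))
    rw [map_add]
    exact ν.map_add _ _
  have hw1 : ∀ f ∈ IsLocalRing.maximalIdeal R, (1 : WithTop ℚ) ≤ w f := by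
    intro f hf
    by_cases hf0 : f = 0
    · rw [hf0, hwz]
      exact le_top
    · have hne : w f ≠ ⊤ := by
        intro htop
        have h0 : algebraMap R (FractionRing R) f ≠ 0 := by
          intro h
          exact hf0 (IsFractionRing.injective R (FractionRing R) (by rw [h, map_zero]))
        have hmul := ν.map_mul (algebraMap R (FractionRing R) f)
          (algebraMap R (FractionRing R) f)⁻¹
        rw [mul_inv_cancel₀ h0, ν.map_one] at hmul
        have htop' : ν (algebraMap R (FractionRing R) f) = ⊤ := htop
        rw [htop'] at hmul
        simp at hmul
      obtain ⟨γ, hγ⟩ := WithTop.ne_top_iff_exists.mp hne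
      have hγU : γ ∈ Uset := by
        rw [← hSU]
        exact ⟨f, hf, hf0, hγ.symm⟩
      have h1 := hγU.1
      rw [← hγ]
      exact_mod_cast h1
  obtain ⟨G, hG⟩ := IsNoetherian.noetherian (IsLocalRing.maximalIdeal R)
  set μ := G.card with hμ
  set n := μ + 4 with hn
  set k := μ + 3 with hk
  have hfin := Uset_Iio_finite ((n : ℚ))
  -- upper bound
  have hupper : hfin.toFinset.card ≤ (∑ i ∈ Finset.range n, μ ^ i) + 1 := by
    refine counting R w hν0 hwz hwmul hwadd hw1 G hG n hfin.toFinset ?_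
    intro γ hγA
    rw [Set.Finite.mem_toFinset] at hγA
    obtain ⟨hγU, hγn⟩ := hγA
    refine ⟨hγn, ?_⟩
    rw [← hSU] at hγU
    obtain ⟨f, hfm, -, hfv⟩ := hγU
    exact ⟨f, hfm, hfv⟩
  -- lower bound
  have hlower : 2 ^ (k ^ k) ≤ hfin.toFinset.card := by
    have hcard := Finset.card_le_card_of_injOn
      (f := fun j : ℕ => (k : ℚ) - 1 + ((j : ℚ) + 1) / 2 ^ (k ^ k))
      (s := Finset.range (2 ^ (k ^ k))) (t := hfin.toFinset) ?_ ?_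
    · simpa using hcard
    · intro j hj
      rw [Finset.coe_range, Set.mem_Iio] at hj
      obtain ⟨hmem, hlt⟩ := Uset_slice (k := k) (by omega) hj
      rw [Finset.mem_coe, Set.Finite.mem_toFinset]
      refine ⟨hmem, ?_⟩
      have hnk : ((n : ℕ) : ℚ) = (k : ℚ) + 1 := by
        have : n = k + 1 := by omega
        rw [this]
        push_cast
        ring
      show _ < ((n : ℕ) : ℚ)
      rw [hnk]
      exact hlt
    · intro a ha b hb hfe
      have h2 : (0 : ℚ) < 2 ^ (k ^ k) := by positivity
      have h3 := add_left_cancel hfe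
      field_simp at h3
      exact_mod_cast add_right_cancel h3
  -- arithmetic contradiction
  have harith : (∑ i ∈ Finset.range n, μ ^ i) + 1 < 2 ^ (k ^ k) := by
    have h1 : (∑ i ∈ Finset.range n, μ ^ i) + 1 ≤ (μ + 2) ^ n := geom_bound μ n
    have h2 : (μ + 2) ^ n < 2 ^ ((μ + 2) * n) := pow_lt_two_pow μ n (by omega)
    have h3 : (μ + 2) * n ≤ k ^ k := by
      have e1 : (μ + 2) * n ≤ (μ + 3) ^ 2 := by nlinarith
      have e2 : (μ + 3) ^ 2 ≤ (μ + 3) ^ (μ + 3) :=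
        Nat.pow_le_pow_right (by omega) (by omega)
      calc (μ + 2) * n ≤ (μ + 3) ^ 2 := e1
        _ ≤ (μ + 3) ^ (μ + 3) := e2
        _ = k ^ k := by rw [hk]
    calc (∑ i ∈ Finset.range n, μ ^ i) + 1 ≤ (μ + 2) ^ n := h1
      _ < 2 ^ ((μ + 2) * n) := h2
      _ ≤ 2 ^ (k ^ k) := Nat.pow_le_pow_right (by omega) h3
  exact absurd (hlower.trans hupper) (not_le.mpr harith)
end

section
/- Let a₁,…,a_k be positive rationals. Set G₀ = ℤ, and for 1 ≤ i ≤ k let S_i be the subsemigroup of ℚ_{≥0} generated by 1, a₁, …, a_i, let G_i = S_i + (−S_i) be the group it generates, q_i = [G_i : G_{i−1}], and x_i = (q₁−1)a₁ + ⋯ + (q_i−1)a_i. Then for all 1 ≤ i ≤ k, |S_i ∩ (x_i − 1, x_i]| ≥ q₁⋯q_i. -/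
/-- Key group-theoretic fact: if `B = A ⊔ ⟨α⟩` with `1 ∈ A`, then `α` has order
`[B : A]` modulo `A`. -/
theorem density_lemma_aux (A B : AddSubgroup ℚ) (α : ℚ)
    (hsup : B = A ⊔ AddSubgroup.closure {α})
    (hone : (1:ℚ) ∈ A) (q : ℕ) (hq : q = A.relIndex B) :
    (0 < q) ∧ ∀ z : ℤ, (z • α ∈ A ↔ (q:ℤ) ∣ z) := by
  have hle : A ≤ B := hsup ▸ le_sup_left
  have hαB : α ∈ B := hsup ▸ AddSubgroup.mem_sup_right (AddSubgroup.mem_closure_singleton_self α)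
  set H := A.addSubgroupOf B with hH
  set b : B ⧸ H := QuotientAddGroup.mk ⟨α, hαB⟩ with hb
  have hzB : ∀ z : ℤ, z • α ∈ B := fun z => AddSubgroup.zsmul_mem B hαB z
  have hmk : ∀ (z : ℤ), z • b = QuotientAddGroup.mk ⟨z • α, hzB z⟩ := by
    intro z
    rw [hb, ← QuotientAddGroup.mk_zsmul]
    exact congrArg _ (Subtype.ext (by simp))
  have hmem : ∀ (z : ℤ), z • b = 0 ↔ z • α ∈ A := by
    intro z
    rw [hmk z, QuotientAddGroup.eq_zero_iff]
    exact AddSubgroup.mem_addSubgroupOf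
  have hgen : ∀ y : B ⧸ H, y ∈ AddSubgroup.zmultiples b := by
    intro y
    induction y using QuotientAddGroup.induction_on with
    | H v =>
      obtain ⟨v, hv⟩ := v
      have hv' := hv
      rw [hsup] at hv'
      obtain ⟨g, hg, w, hw, hgw⟩ := AddSubgroup.mem_sup.mp hv'
      obtain ⟨z, rfl⟩ := AddSubgroup.mem_closure_singleton.mp hw
      refine ⟨z, ?_⟩
      show z • b = _
      rw [hmk z, QuotientAddGroup.eq]
      show -(z • α) + v ∈ A
      have : -(z • α) + v = g := by rw [← hgw]; ring
      rw [this]; exact hg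
  have hfin : IsOfFinAddOrder b := by
    rw [isOfFinAddOrder_iff_nsmul_eq_zero]
    refine ⟨α.den, α.pos, ?_⟩
    rw [← natCast_zsmul, hmem]
    have : (α.den : ℤ) • α = ((α.num : ℤ) : ℚ) := by
      rw [zsmul_eq_mul]
      push_cast
      exact α.den_mul_eq_num
    rw [this]
    simpa using AddSubgroup.zsmul_mem A hone α.num
  have hcard : q = addOrderOf b := by
    rw [hq, AddSubgroup.relIndex, AddSubgroup.index,
      addOrderOf_eq_card_of_forall_mem_zmultiples hgen]
  constructor
  · rw [hcard]; exact hfin.addOrderOf_pos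
  · intro z
    rw [← hmem, ← addOrderOf_dvd_iff_zsmul_eq_zero, hcard]

/-- **Lemma (density), first part.** With `S_i` the submonoid of `ℚ≥0` generated by
`1, a₁, …, a_i`, `G_i` the subgroup it generates (`G₀ = ℤ`), `q_i = [G_i : G_{i-1}]` and
`x_i = (q₁-1)a₁ + ⋯ + (q_i-1)a_i`, we have `|S_i ∩ (x_i - 1, x_i]| ≥ q₁⋯q_i` for `1 ≤ i ≤ k`. -/
theorem density_lemma
    (k : ℕ) (a : ℕ → ℚ) (ha : ∀ i, 1 ≤ i → i ≤ k → 0 < a i)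
    (S : ℕ → AddSubmonoid ℚ)
    (hS : ∀ i, S i = AddSubmonoid.closure ({1} ∪ (a '' {j | 1 ≤ j ∧ j ≤ i})))
    (G : ℕ → AddSubgroup ℚ)
    (hG : ∀ i, G i = AddSubgroup.closure (S i : Set ℚ))
    (q : ℕ → ℕ) (hq : ∀ i, 1 ≤ i → q i = (G (i - 1)).relIndex (G i))
    (x : ℕ → ℚ) (hx : ∀ i, x i = ∑ j ∈ Finset.Icc 1 i, ((q j : ℚ) - 1) * a j) :
    ∀ i, 1 ≤ i → i ≤ k →
      ((∏ j ∈ Finset.Icc 1 i, q j : ℕ) : ℕ∞) ≤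
        ((S i : Set ℚ) ∩ Set.Ioc (x i - 1) (x i)).encard := by
  classical
  have hone : ∀ i, (1:ℚ) ∈ S i := fun i => by
    rw [hS]; exact AddSubmonoid.subset_closure (Or.inl rfl)
  have haS : ∀ i j, 1 ≤ j → j ≤ i → a j ∈ S i := fun i j h1 h2 => by
    rw [hS]; exact AddSubmonoid.subset_closure (Or.inr ⟨j, ⟨h1, h2⟩, rfl⟩)
  have hSmono : ∀ i, ∀ y ∈ S i, y ∈ S (i+1) := fun i y hy => by
    rw [hS] at hy ⊢
    have hsub : {j | 1 ≤ j ∧ j ≤ i} ⊆ {j | 1 ≤ j ∧ j ≤ i + 1} :=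
      fun j hj => ⟨hj.1, hj.2.trans (Nat.le_succ _)⟩
    exact AddSubmonoid.closure_mono (Set.union_subset_union_right _
      (Set.image_mono hsub)) hy
  have hSsubG : ∀ i, ∀ y ∈ S i, y ∈ G i := fun i y hy => by
    rw [hG]; exact AddSubgroup.subset_closure hy
  have hint : ∀ i (n : ℤ), ((n:ℚ)) ∈ G i := fun i n => by
    simpa using AddSubgroup.zsmul_mem _ (hSsubG i 1 (hone i)) n
  have habs : ∀ (s : Set ℚ),
      AddSubgroup.closure ((AddSubmonoid.closure s : AddSubmonoid ℚ) : Set ℚ)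
        = AddSubgroup.closure s := by
    intro s
    apply le_antisymm
    · rw [AddSubgroup.closure_le]
      intro y hy
      exact AddSubmonoid.closure_le.mpr
        (show s ⊆ ((AddSubgroup.closure s).toAddSubmonoid : Set ℚ) from
          AddSubgroup.subset_closure) hy
    · exact AddSubgroup.closure_mono AddSubmonoid.subset_closure
  have hGA : ∀ i, G i = AddSubgroup.closure ({1} ∪ a '' {j | 1 ≤ j ∧ j ≤ i}) := fun i => by
    rw [hG, hS, habs]
  have hGsup : ∀ i, G (i+1) = G i ⊔ AddSubgroup.closure {a (i+1)} := by
    intro i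
    have hset : ({1} ∪ a '' {j | 1 ≤ j ∧ j ≤ i + 1} : Set ℚ)
        = (({1} ∪ a '' {j | 1 ≤ j ∧ j ≤ i}) ∪ {a (i+1)}) := by
      have : {j | 1 ≤ j ∧ j ≤ i + 1} = {j | 1 ≤ j ∧ j ≤ i} ∪ {i + 1} := by
        ext t; simp only [Set.mem_setOf_eq, Set.mem_union, Set.mem_singleton_iff]; omega
      rw [this, Set.image_union, Set.image_singleton, Set.union_assoc]
    rw [hGA, hGA, hset, AddSubgroup.closure_union]
  have key : ∀ i, 0 < q (i+1) ∧ ∀ z : ℤ, (z • a (i+1) ∈ G i ↔ ((q (i+1)):ℤ) ∣ z) := by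
    intro i
    refine density_lemma_aux (G i) (G (i+1)) (a (i+1)) (hGsup i)
      (hSsubG i 1 (hone i)) (q (i+1)) ?_
    simpa using hq (i+1) (by omega)
  have main : ∀ i, i ≤ k → ∃ T : Finset ℚ,
      (↑T : Set ℚ) ⊆ (S i : Set ℚ) ∩ Set.Ioc (x i - 1) (x i) ∧
      (∏ j ∈ Finset.Icc 1 i, q j) ≤ T.card := by
    intro i
    induction i with
    | zero =>
      intro _
      refine ⟨{0}, ?_, by simp⟩
      intro y hy
      simp only [Finset.coe_singleton, Set.mem_singleton_iff] at hy
      subst hy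
      have hx0 : x 0 = 0 := by rw [hx]; simp
      refine ⟨(S 0).zero_mem, ?_, ?_⟩ <;> rw [hx0] <;> norm_num
    | succ i ih =>
      intro hik
      obtain ⟨T, hTsub, hTcard⟩ := ih (by omega)
      obtain ⟨hqpos, hkey⟩ := key i
      have hα : 0 < a (i+1) := ha (i+1) (by omega) hik
      have hxs : x (i+1) = x i + ((q (i+1):ℚ) - 1) * a (i+1) := by
        rw [hx, hx, Finset.sum_Icc_succ_top (by omega)]
      set f : ℚ × ℕ → ℚ := fun p =>
        p.1 + (p.2:ℚ) * a (i+1) + ((⌊x (i+1) - p.1 - (p.2:ℚ) * a (i+1)⌋ : ℤ) : ℚ) with hf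
      have hT' : ∀ s ∈ T, s ∈ (S i : Set ℚ) ∧ x i - 1 < s ∧ s ≤ x i := by
        intro s hs
        have h := hTsub hs
        exact ⟨h.1, h.2.1, h.2.2⟩
      have hc : ∀ s ∈ T, ∀ m : ℕ, m < q (i+1) → 0 ≤ x (i+1) - s - (m:ℚ) * a (i+1) := by
        intro s hs m hm
        obtain ⟨-, -, hsle⟩ := hT' s hs
        have hm' : (m:ℚ) + 1 ≤ (q (i+1):ℚ) := by exact_mod_cast hm
        rw [hxs]
        nlinarith [hα.le]
      have hmaps : ∀ s ∈ T, ∀ m : ℕ, m < q (i+1) →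
          f (s, m) ∈ (S (i+1) : Set ℚ) ∩ Set.Ioc (x (i+1) - 1) (x (i+1)) := by
        intro s hs m hm
        obtain ⟨hsS, -, -⟩ := hT' s hs
        have hc0 : 0 ≤ x (i+1) - s - (m:ℚ) * a (i+1) := hc s hs m hm
        set c := x (i+1) - s - (m:ℚ) * a (i+1) with hcdef
        have hn0 : 0 ≤ ⌊c⌋ := Int.floor_nonneg.mpr hc0
        have hfval : f (s, m) = s + (m:ℚ) * a (i+1) + ((⌊c⌋ : ℤ) : ℚ) := rfl
        constructor
        · rw [hfval]
          have h1 : s ∈ S (i+1) := hSmono i s hsS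
          have h2 : (m:ℚ) * a (i+1) ∈ S (i+1) := by
            have := AddSubmonoid.nsmul_mem (S (i+1)) (haS (i+1) (i+1) (by omega) le_rfl) m
            simpa [nsmul_eq_mul] using this
          have h3 : ((⌊c⌋ : ℤ) : ℚ) ∈ S (i+1) := by
            have := AddSubmonoid.nsmul_mem (S (i+1)) (hone (i+1)) (⌊c⌋.toNat)
            have h4 : ((⌊c⌋.toNat : ℚ)) ∈ S (i+1) := by simpa [nsmul_eq_mul] using this
            have h5 : ((⌊c⌋.toNat : ℚ)) = ((⌊c⌋ : ℤ) : ℚ) := by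
              exact_mod_cast congrArg (fun z : ℤ => (z : ℚ)) (Int.toNat_of_nonneg hn0)
            rwa [h5] at h4
          exact add_mem (add_mem h1 h2) h3
        · have hfl : c - 1 < (⌊c⌋ : ℚ) := Int.sub_one_lt_floor c
          have hfl2 : ((⌊c⌋ : ℤ) : ℚ) ≤ c := Int.floor_le c
          rw [hfval]
          constructor
          · rw [hcdef] at hfl; linarith
          · rw [hcdef] at hfl2; linarith
      have hinj : Set.InjOn f ↑(T ×ˢ Finset.range (q (i+1))) := by
        intro p hp p' hp' hfe
        simp only [Finset.coe_product, Set.mem_prod, Finset.mem_coe, Finset.coe_range,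
          Set.mem_Iio] at hp hp'
        obtain ⟨hpT, hpm⟩ := hp
        obtain ⟨hp'T, hp'm⟩ := hp'
        obtain ⟨hsS, hsl, hsu⟩ := hT' _ hpT
        obtain ⟨hs'S, hs'l, hs'u⟩ := hT' _ hp'T
        set n := ⌊x (i+1) - p.1 - (p.2:ℚ) * a (i+1)⌋ with hn
        set n' := ⌊x (i+1) - p'.1 - (p'.2:ℚ) * a (i+1)⌋ with hn'
        have hfe' : p.1 + (p.2:ℚ) * a (i+1) + (n:ℚ)
            = p'.1 + (p'.2:ℚ) * a (i+1) + ((n':ℤ):ℚ) := hfe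
        have hzmem : ((p.2:ℤ) - (p'.2:ℤ)) • a (i+1) ∈ G i := by
          have heq : ((p.2:ℤ) - (p'.2:ℤ)) • a (i+1)
              = (p'.1 + ((n':ℤ):ℚ)) - (p.1 + ((n:ℤ):ℚ)) := by
            rw [zsmul_eq_mul]; push_cast; linarith
          rw [heq]
          exact sub_mem (add_mem (hSsubG i _ hs'S) (hint i n'))
            (add_mem (hSsubG i _ hsS) (hint i n))
        have hdvd := (hkey _).mp hzmem
        have hm_eq : p.2 = p'.2 := by
          have habs2 : |(p.2:ℤ) - (p'.2:ℤ)| < ((q (i+1)):ℤ) := by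
            rw [abs_sub_lt_iff]
            constructor <;> [skip; skip] <;>
              (first | (have := hpm; have := hp'm; omega))
          have h0 := Int.eq_zero_of_abs_lt_dvd hdvd habs2
          omega
        have hs_eq : p.1 = p'.1 := by
          have heq2 : ((n' - n : ℤ):ℚ) = p.1 - p'.1 := by
            rw [hm_eq] at hfe'
            push_cast
            linarith
          have h1 : (n' - n : ℤ) < 1 := by
            have : ((n' - n : ℤ):ℚ) < 1 := by rw [heq2]; linarith
            exact_mod_cast this
          have h2 : (-1 : ℤ) < (n' - n : ℤ) := by
            have : (-1:ℚ) < ((n' - n : ℤ):ℚ) := by rw [heq2]; linarith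
            exact_mod_cast this
          have h3 : n' - n = 0 := by omega
          have := heq2
          rw [h3] at this
          simp at this
          linarith [this]
        exact Prod.ext hs_eq hm_eq
      refine ⟨(T ×ˢ Finset.range (q (i+1))).image f, ?_, ?_⟩
      · intro y hy
        simp only [Finset.coe_image, Set.mem_image, Finset.mem_coe, Finset.mem_product,
          Finset.mem_range] at hy
        obtain ⟨⟨s, m⟩, ⟨hsT, hm⟩, rfl⟩ := hy
        exact hmaps s hsT m hm
      · rw [Finset.card_image_of_injOn hinj, Finset.card_product, Finset.card_range,
          Finset.prod_Icc_succ_top (by omega)]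
        exact Nat.mul_le_mul_right _ hTcard
  intro i _ hik
  obtain ⟨T, hsub, hcard⟩ := main i hik
  calc ((∏ j ∈ Finset.Icc 1 i, q j : ℕ) : ℕ∞) ≤ (T.card : ℕ∞) := by exact_mod_cast hcard
    _ = (↑T : Set ℚ).encard := (Set.encard_coe_eq_coe_finsetCard T).symm
    _ ≤ _ := Set.encard_le_encard hsub
end

section
/- With the notation of the previous lemma (a₁,…,a_k positive rationals, S_i the semigroup generated by 1, a₁,…,a_i, G_i the generated group, q_i = [G_i : G_{i−1}], x_i = (q₁−1)a₁+⋯+(q_i−1)a_i): for every real x > x_i, one has S_i ∩ [x−1, ∞) = G_i ∩ [x−1, ∞) and |S_i ∩ [x−1, x)| = q₁⋯q_i. -/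
open AddSubgroup

private lemma closure_submonoid (s : Set ℚ) :
    AddSubgroup.closure ((AddSubmonoid.closure s : AddSubmonoid ℚ) : Set ℚ)
      = AddSubgroup.closure s := by
  refine le_antisymm ?_ (closure_mono AddSubmonoid.subset_closure)
  rw [closure_le]
  exact AddSubgroup.le_closure_toAddSubmonoid s

private lemma zmul_div_sup (a b c : ℤ) (hc : (c : ℚ) ≠ 0) :
    zmultiples ((a : ℚ) / c) ⊔ zmultiples ((b : ℚ) / c)
      = zmultiples ((Int.gcd a b : ℚ) / c) := by
  apply le_antisymm
  · rw [sup_le_iff]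
    constructor
    · rw [zmultiples_le]
      obtain ⟨u, hu⟩ : ((Int.gcd a b : ℤ)) ∣ a := Int.gcd_dvd_left _ _
      have ha : (a : ℚ) = (Int.gcd a b : ℚ) * u := by exact_mod_cast hu
      refine mem_zmultiples_iff.2 ⟨u, ?_⟩
      rw [zsmul_eq_mul, ha]; ring
    · rw [zmultiples_le]
      obtain ⟨u, hu⟩ : ((Int.gcd a b : ℤ)) ∣ b := Int.gcd_dvd_right _ _
      have hb : (b : ℚ) = (Int.gcd a b : ℚ) * u := by exact_mod_cast hu
      refine mem_zmultiples_iff.2 ⟨u, ?_⟩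
      rw [zsmul_eq_mul, hb]; ring
  · rw [zmultiples_le, AddSubgroup.mem_sup]
    refine ⟨(Int.gcdA a b) • ((a : ℚ) / c), zsmul_mem (mem_zmultiples _) _,
      (Int.gcdB a b) • ((b : ℚ) / c), zsmul_mem (mem_zmultiples _) _, ?_⟩
    have hQ : (Int.gcd a b : ℚ) = a * Int.gcdA a b + b * Int.gcdB a b := by
      exact_mod_cast Int.gcd_eq_gcd_ab a b
    rw [zsmul_eq_mul, zsmul_eq_mul]
    field_simp
    linear_combination -hQ

private lemma relindex_zmul (m d : ℕ) (hm : 0 < m) (hd : 0 < d) :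
    (zmultiples ((m : ℚ)⁻¹)).relIndex (zmultiples (((d * m : ℕ) : ℚ)⁻¹)) = d := by
  have hmQ : ((m : ℚ)) ≠ 0 := by positivity
  have hdQ : ((d : ℚ)) ≠ 0 := by positivity
  set M : ℚ := ((d * m : ℕ) : ℚ)⁻¹ with hM
  set f : ℤ →+ ℚ := zmultiplesHom ℚ M with hf
  have hrange : f.range = zmultiples M := range_zmultiplesHom M
  have hcomap : AddSubgroup.comap f (zmultiples ((m : ℚ)⁻¹)) = zmultiples ((d : ℤ)) := by
    ext n
    simp only [AddSubgroup.mem_comap, mem_zmultiples_iff, hf, zmultiplesHom_apply,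
      zsmul_eq_mul]
    constructor
    · rintro ⟨j, hj⟩
      refine ⟨j, ?_⟩
      rw [hM] at hj
      push_cast at hj
      field_simp at hj
      have : ((j * d : ℤ) : ℚ) * m = ((n : ℤ) : ℚ) * m := by push_cast; rw [hj]
      have := mul_right_cancel₀ hmQ this
      exact_mod_cast this
    · rintro ⟨j, hj⟩
      refine ⟨j, ?_⟩
      have hj' : (j : ℚ) * d = n := by exact_mod_cast hj
      rw [hM]
      push_cast
      rw [← hj']
      field_simp
  have h1 := AddSubgroup.relIndex_comap (H := zmultiples ((m : ℚ)⁻¹)) f (⊤ : AddSubgroup ℤ)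
  rw [AddSubgroup.relIndex_top_right, hcomap, Int.index_zmultiples,
    ← AddMonoidHom.range_eq_map, hrange] at h1
  rw [← h1]
  simp

private lemma count_lemma (m : ℕ) (hm : 0 < m) (y : ℝ) :
    ((zmultiples ((m : ℚ)⁻¹) : Set ℚ) ∩ {r : ℚ | y - 1 ≤ (r : ℝ) ∧ (r : ℝ) < y}).encard
      = (m : ℕ∞) := by
  have hmR : (0 : ℝ) < m := by exact_mod_cast hm
  have hmQ : ((m : ℚ)) ≠ 0 := by positivity
  set c : ℤ := ⌈(y - 1) * m⌉ with hc
  have key : ((zmultiples ((m : ℚ)⁻¹) : Set ℚ) ∩ {r : ℚ | y - 1 ≤ (r : ℝ) ∧ (r : ℝ) < y})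
      = (fun n : ℤ => (n : ℚ) / m) '' (Set.Ico c (c + m)) := by
    ext r
    simp only [Set.mem_inter_iff, SetLike.mem_coe, mem_zmultiples_iff, Set.mem_image,
      Set.mem_Ico, Set.mem_setOf_eq, zsmul_eq_mul]
    constructor
    · rintro ⟨⟨n, hn⟩, h1, h2⟩
      have hr : r = (n : ℚ) / m := by rw [← hn]; ring
      have hrR : (r : ℝ) = (n : ℝ) / m := by rw [hr]; push_cast; ring
      refine ⟨n, ⟨?_, ?_⟩, hr.symm⟩
      · rw [hc]
        apply Int.ceil_le.2
        rw [← sub_nonneg]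
        have := (le_div_iff₀ hmR).1 (hrR ▸ h1)
        linarith
      · have hlt : (n : ℝ) < y * m := by
          have := (div_lt_iff₀ hmR).1 (hrR ▸ h2)
          linarith
        have : n - m < c := by
          rw [hc]
          apply Int.lt_ceil.2
          push_cast
          linarith
        omega
    · rintro ⟨n, ⟨hn1, hn2⟩, rfl⟩
      have hrR : (((n : ℚ) / m : ℚ) : ℝ) = (n : ℝ) / m := by push_cast; ring
      refine ⟨⟨n, (div_eq_mul_inv _ _).symm⟩, ?_, ?_⟩
      · rw [hrR, le_div_iff₀ hmR]
        have : ((y - 1) * m : ℝ) ≤ (c : ℝ) := Int.le_ceil _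
        have hcn : (c : ℝ) ≤ n := by exact_mod_cast hn1
        linarith
      · rw [hrR, div_lt_iff₀ hmR]
        have h3 : (n : ℝ) ≤ (c : ℝ) - 1 + m := by
          exact_mod_cast (by omega : n ≤ c - 1 + (m : ℤ))
        have h4 : (c : ℝ) - 1 < (y - 1) * m := by
          have := Int.ceil_lt_add_one ((y - 1) * (m:ℝ))
          rw [← hc] at this
          linarith
        linarith
  rw [key]
  rw [Set.InjOn.encard_image]
  · rw [← Finset.coe_Ico, Set.encard_coe_eq_coe_finsetCard, Int.card_Ico]
    simp
  · intro p _ q _ h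
    field_simp at h
    exact_mod_cast h
/-- **Lemma (density), second part.** With the same notation, for every real `x > x_i` one has
`S_i ∩ [x-1, ∞) = G_i ∩ [x-1, ∞)` (as sets of rationals) and `|S_i ∩ [x-1, x)| = q₁⋯q_i`. -/
theorem density_lemma_tail
    (k : ℕ) (a : ℕ → ℚ) (ha : ∀ i, 1 ≤ i → i ≤ k → 0 < a i)
    (S : ℕ → AddSubmonoid ℚ)
    (hS : ∀ i, S i = AddSubmonoid.closure ({1} ∪ (a '' {j | 1 ≤ j ∧ j ≤ i})))
    (G : ℕ → AddSubgroup ℚ)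
    (hG : ∀ i, G i = AddSubgroup.closure (S i : Set ℚ))
    (q : ℕ → ℕ) (hq : ∀ i, 1 ≤ i → q i = (G (i - 1)).relIndex (G i))
    (x : ℕ → ℚ) (hx : ∀ i, x i = ∑ j ∈ Finset.Icc 1 i, ((q j : ℚ) - 1) * a j) :
    ∀ i, 1 ≤ i → i ≤ k → ∀ y : ℝ, (x i : ℝ) < y →
      ((S i : Set ℚ) ∩ {r : ℚ | y - 1 ≤ (r : ℝ)} =
        (G i : Set ℚ) ∩ {r : ℚ | y - 1 ≤ (r : ℝ)}) ∧
      ((S i : Set ℚ) ∩ {r : ℚ | y - 1 ≤ (r : ℝ) ∧ (r : ℝ) < y}).encard =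
        ((∏ j ∈ Finset.Icc 1 i, q j : ℕ) : ℕ∞) := by
  have hSsub : ∀ i, (S i : Set ℚ) ⊆ (G i : Set ℚ) := fun i r hr => by
    rw [hG i]; exact AddSubgroup.subset_closure hr
  have hGc : ∀ i, G i = AddSubgroup.closure ({1} ∪ (a '' {j | 1 ≤ j ∧ j ≤ i})) := fun i => by
    rw [hG i, hS i, closure_submonoid]
  have key : ∀ i, i ≤ k → ∃ m : ℕ, 0 < m ∧ G i = zmultiples ((m : ℚ)⁻¹) ∧
      m = ∏ j ∈ Finset.Icc 1 i, q j ∧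
      ∀ y : ℝ, (x i : ℝ) < y → ∀ r : ℚ, r ∈ G i → y - 1 ≤ (r : ℝ) → r ∈ S i := by
    intro i
    induction i with
    | zero =>
      intro _
      have hG0 : G 0 = zmultiples (((1 : ℕ) : ℚ)⁻¹) := by
        rw [hGc 0]
        have h0 : {j : ℕ | 1 ≤ j ∧ j ≤ 0} = ∅ := by ext j; simp; omega
        rw [h0]
        simp [AddSubgroup.zmultiples_eq_closure]
      refine ⟨1, one_pos, hG0, by simp, ?_⟩
      intro y hy r hr hyr
      have hx0 : (x 0 : ℝ) = 0 := by rw [hx]; simp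
      rw [hG0] at hr
      obtain ⟨n, hn⟩ := mem_zmultiples_iff.1 hr
      have hrn : r = (n : ℚ) := by rw [← hn]; simp
      have hn0 : 0 ≤ n := by
        by_contra hcon
        push_neg at hcon
        have h1 : (n : ℝ) ≤ -1 := by exact_mod_cast (by omega : n ≤ -1)
        have h2 : (r : ℝ) = (n : ℝ) := by rw [hrn]; push_cast; ring
        rw [hx0] at hy
        rw [h2] at hyr
        linarith
      rw [hS 0]
      have h1 : (1 : ℚ) ∈ AddSubmonoid.closure ({1} ∪ (a '' {j | 1 ≤ j ∧ j ≤ 0})) :=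
        AddSubmonoid.subset_closure (Or.inl rfl)
      have : r = n.toNat • (1 : ℚ) := by
        rw [nsmul_eq_mul, hrn]
        have : ((n.toNat : ℕ) : ℚ) = (n : ℚ) := by exact_mod_cast Int.toNat_of_nonneg hn0
        rw [this, mul_one]
      rw [this]
      exact nsmul_mem h1 _
    | succ i ih =>
      intro hik
      obtain ⟨m, hm, hGm, hmq, hmem⟩ := ih (by omega)
      have hmQ : ((m : ℚ)) ≠ 0 := by positivity
      set A := a (i + 1) with hA
      have hApos : 0 < A := ha (i + 1) (by omega) hik
      have hdenpos : 0 < A.den := A.pos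
      have hnum : 0 < A.num := Rat.num_pos.2 hApos
      have hGsup : G (i + 1) = G i ⊔ zmultiples A := by
        rw [hGc (i + 1), hGc i]
        have hset : {j : ℕ | 1 ≤ j ∧ j ≤ i + 1} = {j : ℕ | 1 ≤ j ∧ j ≤ i} ∪ {i + 1} := by
          ext j
          simp only [Set.mem_setOf_eq, Set.mem_union, Set.mem_singleton_iff]
          omega
        rw [hset, Set.image_union, Set.image_singleton, ← Set.union_assoc,
          AddSubgroup.closure_union, AddSubgroup.zmultiples_eq_closure]
      set g : ℕ := Int.gcd (A.den : ℤ) (A.num * m) with hg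
      have hgdvd : g ∣ A.den := by
        have := Int.gcd_dvd_left (a := ((A.den : ℤ))) (b := A.num * m)
        exact_mod_cast this
      have hgpos : 0 < g := by
        rw [hg]
        apply Int.gcd_pos_iff.2
        left
        exact_mod_cast hdenpos.ne'
      set d : ℕ := A.den / g with hd
      have hdpos : 0 < d := Nat.div_pos (Nat.le_of_dvd hdenpos hgdvd) hgpos
      have hdg : d * g = A.den := Nat.div_mul_cancel hgdvd
      have hMQ : (((d * m : ℕ) : ℚ)) ≠ 0 := by positivity
      set D : ℤ := (m : ℤ) * A.den with hD
      have hDne : ((D : ℤ) : ℚ) ≠ 0 := by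
        rw [hD]; push_cast; positivity
      have h1 : ((m : ℚ))⁻¹ = ((A.den : ℤ) : ℚ) / ((D : ℤ) : ℚ) := by
        rw [hD]; push_cast
        rw [eq_div_iff (by positivity)]
        field_simp
      have h2 : A = ((A.num * (m : ℤ) : ℤ) : ℚ) / ((D : ℤ) : ℚ) := by
        conv_lhs => rw [← Rat.num_div_den A]
        rw [hD]; push_cast
        rw [div_eq_div_iff (by positivity) (by positivity)]
        ring
      have hgcd : Int.gcd ((A.den : ℤ)) (A.num * (m : ℤ)) = g := rfl
      have hGz : G (i + 1) = zmultiples (((d * m : ℕ) : ℚ)⁻¹) := by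
        rw [hGsup, hGm, h2, h1, zmul_div_sup _ _ _ hDne, hgcd]
        congr 1
        have hMD : ((d * m : ℕ) : ℚ) * g = ((D : ℤ) : ℚ) := by
          rw [hD]
          push_cast [← hdg]
          ring
        rw [show (((d * m : ℕ) : ℚ))⁻¹ = (1 : ℚ) / ((d * m : ℕ) : ℚ) from (one_div _).symm,
          div_eq_div_iff hDne hMQ]
        linear_combination hMD
      have hqd : q (i + 1) = d := by
        have h := hq (i + 1) (by omega)
        rw [Nat.add_sub_cancel] at h
        rw [h, hGm, hGz, relindex_zmul m d hm hdpos]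
      have hprod : d * m = ∏ j ∈ Finset.Icc 1 (i + 1), q j := by
        rw [Finset.prod_Icc_succ_top (by omega : 1 ≤ i + 1), ← hmq, hqd]
        ring
      -- Bezout relation
      have hmemA : A ∈ G (i + 1) := by
        rw [hGsup]
        exact AddSubgroup.mem_sup_right (mem_zmultiples A)
      obtain ⟨ε, hε⟩ := mem_zmultiples_iff.1 (hGz ▸ hmemA)
      have hinv : ((d * m : ℕ) : ℚ)⁻¹ ∈ G i ⊔ zmultiples A := by
        rw [← hGsup, hGz]
        exact mem_zmultiples _
      obtain ⟨u, hu, v, hv, huv⟩ := AddSubgroup.mem_sup.1 hinv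
      rw [hGm] at hu
      obtain ⟨s, hs⟩ := mem_zmultiples_iff.1 hu
      obtain ⟨t, ht⟩ := mem_zmultiples_iff.1 hv
      have hdQ : ((d : ℚ)) ≠ 0 := by positivity
      have hdm' : ((d * m : ℕ) : ℚ) = (d : ℚ) * (m : ℚ) := by push_cast; ring
      have hdmQ : ((m : ℚ))⁻¹ = (d : ℚ) * ((d : ℚ) * (m : ℚ))⁻¹ := by
        rw [mul_inv, ← mul_assoc, mul_inv_cancel₀ hdQ, one_mul]
      have hBez : s * d + t * ε = 1 := by
        have h3 : u = (s : ℚ) * (m : ℚ)⁻¹ := by rw [← hs, zsmul_eq_mul]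
        have h4 : v = (t : ℚ) * ((ε : ℚ) * ((d : ℚ) * (m : ℚ))⁻¹) := by
          rw [← ht, ← hε, zsmul_eq_mul, zsmul_eq_mul, hdm']
        rw [h3, h4, hdm'] at huv
        have hQ : ((s * d + t * ε : ℤ) : ℚ) * ((d : ℚ) * (m : ℚ))⁻¹
            = 1 * ((d : ℚ) * (m : ℚ))⁻¹ := by
          push_cast
          linear_combination huv - (s : ℚ) * hdmQ
        have := mul_right_cancel₀ (inv_ne_zero (by positivity)) hQ
        exact_mod_cast this
      refine ⟨d * m, by positivity, hGz, hprod, ?_⟩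
      intro y hy r hrG hyr
      rw [hGz] at hrG
      obtain ⟨n, hn⟩ := mem_zmultiples_iff.1 hrG
      have hdZ : (0 : ℤ) < (d : ℤ) := by exact_mod_cast hdpos
      set τ : ℤ := (n * t) % d with hτ
      have hτ0 : 0 ≤ τ := Int.emod_nonneg _ hdZ.ne'
      have hτd : τ < d := Int.emod_lt_of_pos _ hdZ
      obtain ⟨w, hw⟩ : (d : ℤ) ∣ n * t - τ := Int.dvd_self_sub_of_emod_eq rfl
      have hBezQ : (s : ℚ) * d + t * ε = 1 := by exact_mod_cast hBez
      have hwQ : (n : ℚ) * t - τ = d * w := by exact_mod_cast hw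
      have hhG : r - (τ : ℚ) * A ∈ G i := by
        rw [hGm]
        refine mem_zmultiples_iff.2 ⟨n * s + w * ε, ?_⟩
        rw [zsmul_eq_mul, ← hn, ← hε, zsmul_eq_mul, zsmul_eq_mul, hdm', hdmQ]
        push_cast
        linear_combination (((d : ℚ) * (m : ℚ))⁻¹ * n) * hBezQ -
          (((d : ℚ) * (m : ℚ))⁻¹ * (ε : ℚ)) * hwQ
      have hxsucc : x (i + 1) = x i + ((q (i + 1) : ℚ) - 1) * A := by
        rw [hx, hx, Finset.sum_Icc_succ_top (by omega : 1 ≤ i + 1)]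
      have hAR : (0 : ℝ) < ((A : ℚ) : ℝ) := by exact_mod_cast hApos
      have hy' : (x i : ℝ) < y - ((d : ℝ) - 1) * ((A : ℚ) : ℝ) := by
        have hcast : (x (i + 1) : ℝ) = (x i : ℝ) + ((d : ℝ) - 1) * ((A : ℚ) : ℝ) := by
          rw [hxsucc, hqd]; push_cast; ring
        rw [hcast] at hy
        linarith
      have hτA : (τ : ℝ) * ((A : ℚ) : ℝ) ≤ ((d : ℝ) - 1) * ((A : ℚ) : ℝ) := by
        apply mul_le_mul_of_nonneg_right _ hAR.le
        exact_mod_cast Int.le_sub_one_iff.mpr hτd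
      have hhS : r - (τ : ℚ) * A ∈ S i := by
        apply hmem _ hy' _ hhG
        have hcast : ((r - (τ : ℚ) * A : ℚ) : ℝ) = (r : ℝ) - (τ : ℝ) * ((A : ℚ) : ℝ) := by
          push_cast; ring
        rw [hcast]
        linarith
      have hSmono : (S i : Set ℚ) ⊆ (S (i + 1) : Set ℚ) := by
        rw [hS i, hS (i + 1)]
        apply AddSubmonoid.closure_mono
        apply Set.union_subset_union_right
        apply Set.image_mono
        intro j hj
        simp only [Set.mem_setOf_eq] at hj ⊢
        exact ⟨hj.1, by omega⟩
      have hAmem : A ∈ S (i + 1) := by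
        rw [hS (i + 1)]
        exact AddSubmonoid.subset_closure (Or.inr ⟨i + 1, ⟨by omega, le_refl _⟩, rfl⟩)
      have hsplit : r = (r - (τ : ℚ) * A) + τ.toNat • A := by
        rw [nsmul_eq_mul]
        have : ((τ.toNat : ℕ) : ℚ) = (τ : ℚ) := by exact_mod_cast Int.toNat_of_nonneg hτ0
        rw [this]; ring
      rw [hsplit]
      exact AddSubmonoid.add_mem _ (hSmono hhS) (nsmul_mem hAmem _)
  intro i _ hik y hy
  obtain ⟨m, hm, hGm, hmq, hmem⟩ := key i hik
  constructor
  · apply Set.eq_of_subset_of_subset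
    · exact Set.inter_subset_inter_left _ (hSsub i)
    · rintro r ⟨hrG, hr⟩
      exact ⟨hmem y hy r hrG hr, hr⟩
  · have hEq : (S i : Set ℚ) ∩ {r : ℚ | y - 1 ≤ (r : ℝ) ∧ (r : ℝ) < y}
        = (zmultiples ((m : ℚ)⁻¹) : Set ℚ) ∩ {r : ℚ | y - 1 ≤ (r : ℝ) ∧ (r : ℝ) < y} := by
      rw [← hGm]
      ext r
      constructor
      · rintro ⟨h1, h2⟩
        exact ⟨hSsub i h1, h2⟩
      · rintro ⟨h1, h2⟩
        exact ⟨hmem y hy r h1 h2.1, h2⟩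
    rw [hEq, count_lemma m hm y, hmq]
end

section
/- If a is a positive rational with denominator q₁ (in lowest terms a = a₁/b with b = q₁ > 1), and S₁ is the submonoid of ℚ_{≥0} generated by 1 and a, then S₁ is the disjoint union of the ℕ-modules ℕ, a+ℕ, 2a+ℕ, …, (q₁−1)a+ℕ, and consequently |S₁ ∩ ((q₁−1)a − 1, (q₁−1)a]| = q₁. -/
private lemma bcdu_aux (a : ℚ) {j j' : ℕ} (m m' : ℕ) (hj' : j' < a.den)
    (hle : j ≤ j') (h : (j:ℚ)*a + m = (j':ℚ)*a + m') : j = j' := by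
  by_contra hne
  have hd : 0 < j' - j := Nat.sub_pos_of_lt (lt_of_le_of_ne hle hne)
  have h1 : ((j' - j : ℕ) : ℚ) * a = (m : ℚ) - m' := by
    push_cast [Nat.cast_sub hle]
    linarith [h]
  have hda : a * a.den = a.num := Rat.mul_den_eq_num a
  have h2 : ((j' - j : ℕ) : ℤ) * a.num = ((m:ℤ) - m') * a.den := by
    have := congrArg (· * (a.den:ℚ)) h1
    simp only [mul_assoc, hda] at this
    exact_mod_cast this
  have h3 : (a.den : ℤ) ∣ ((j' - j : ℕ) : ℤ) * a.num := ⟨(m:ℤ) - m', by linarith [h2]⟩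
  have h4 : a.den ∣ (j' - j) * a.num.natAbs := by
    have := Int.natAbs_dvd_natAbs.mpr h3
    simpa [Int.natAbs_mul] using this
  have h5 : a.den ∣ j' - j :=
    (Nat.Coprime.dvd_of_dvd_mul_right (a.reduced.symm) h4)
  have := Nat.le_of_dvd hd h5
  omega

private lemma bcdu_key (a : ℚ) {j j' : ℕ} (m m' : ℕ) (hj : j < a.den) (hj' : j' < a.den)
    (h : (j:ℚ)*a + m = (j':ℚ)*a + m') : j = j' := by
  rcases le_total j j' with hle | hle
  · exact bcdu_aux a m m' hj' hle h
  · exact (bcdu_aux a m' m hj hle h.symm).symm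

/-- If `a` is a positive rational with denominator `b = a.den > 1` and `S₁` is the submonoid of
`ℚ≥0` generated by `1` and `a`, then `S₁` is the disjoint union of the `ℕ`-modules
`ℕ, a+ℕ, …, (b-1)a+ℕ`, and consequently `|S₁ ∩ ((b-1)a - 1, (b-1)a]| = b`. -/
theorem base_case_disjoint_union
    (a : ℚ) (ha : 0 < a) (hden : 1 < a.den)
    (S₁ : AddSubmonoid ℚ) (hS₁ : S₁ = AddSubmonoid.closure {1, a}) :
    ((S₁ : Set ℚ) = ⋃ j ∈ Finset.range a.den, Set.range (fun m : ℕ => (j : ℚ) * a + m)) ∧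
    (∀ j j' : ℕ, j < a.den → j' < a.den → j ≠ j' →
      Disjoint (Set.range (fun m : ℕ => (j : ℚ) * a + m))
        (Set.range (fun m : ℕ => (j' : ℚ) * a + m))) ∧
    ((S₁ : Set ℚ) ∩
        Set.Ioc (((a.den : ℚ) - 1) * a - 1) (((a.den : ℚ) - 1) * a)).encard =
      (a.den : ℕ∞) := by
  have hb0 : 0 < a.den := a.pos
  have hnum : 0 < a.num := Rat.num_pos.mpr ha
  have hba : (a.den : ℚ) * a = a.num := Rat.den_mul_eq_num a
  -- membership characterization
  have hmem : ∀ x : ℚ, x ∈ S₁ ↔ ∃ j m : ℕ, j < a.den ∧ (j:ℚ) * a + m = x := by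
    intro x
    rw [hS₁, AddSubmonoid.mem_closure_pair]
    constructor
    · rintro ⟨m, n, rfl⟩
      refine ⟨n % a.den, m + (n / a.den) * a.num.toNat, Nat.mod_lt _ hb0, ?_⟩
      have hn : (a.den : ℚ) * ((n / a.den : ℕ) : ℚ) + ((n % a.den : ℕ) : ℚ) = (n : ℚ) := by
        exact_mod_cast Nat.div_add_mod n a.den
      have htn : ((a.num.toNat : ℕ) : ℚ) = (a.num : ℚ) := by
        exact_mod_cast congrArg (fun z : ℤ => (z:ℚ)) (Int.toNat_of_nonneg hnum.le)
      simp only [nsmul_eq_mul]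
      push_cast
      rw [htn, ← hba, ← hn]
      ring
    · rintro ⟨j, m, hj, rfl⟩
      exact ⟨m, j, by simp [nsmul_eq_mul]; ring⟩
  -- Part 1
  have part1 : (S₁ : Set ℚ) =
      ⋃ j ∈ Finset.range a.den, Set.range (fun m : ℕ => (j : ℚ) * a + m) := by
    ext x
    simp only [Set.mem_iUnion, Finset.mem_range, Set.mem_range, SetLike.mem_coe, hmem]
    constructor
    · rintro ⟨j, m, hj, rfl⟩; exact ⟨j, hj, m, rfl⟩
    · rintro ⟨j, hj, m, rfl⟩; exact ⟨j, m, hj, rfl⟩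
  refine ⟨part1, ?_, ?_⟩
  · intro j j' hj hj' hne
    rw [Set.disjoint_left]
    rintro x ⟨m, rfl⟩ ⟨m', hm'⟩
    exact hne (bcdu_key a m' m hj' hj hm').symm
  -- Part 3
  · set f : ℕ → ℚ := fun j => (j:ℚ) * a + (⌊((a.den:ℚ) - 1 - j) * a⌋.toNat : ℕ) with hf
    have hfl : ∀ j : ℕ, j < a.den → ((⌊((a.den:ℚ) - 1 - j) * a⌋.toNat : ℕ) : ℚ)
        = (⌊((a.den:ℚ) - 1 - j) * a⌋ : ℚ) := by
      intro j hj
      have hx : (0:ℚ) ≤ ((a.den:ℚ) - 1 - j) * a := by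
        have : (j:ℚ) ≤ (a.den:ℚ) - 1 := by
          have : (j:ℚ) + 1 ≤ (a.den:ℚ) := by exact_mod_cast hj
          linarith
        nlinarith
      have := Int.floor_nonneg.mpr hx
      exact_mod_cast congrArg (fun z : ℤ => (z:ℚ)) (Int.toNat_of_nonneg this)
    have hTeq : (S₁ : Set ℚ) ∩
        Set.Ioc (((a.den : ℚ) - 1) * a - 1) (((a.den : ℚ) - 1) * a)
        = ↑((Finset.range a.den).image f) := by
      ext x
      simp only [Finset.coe_image, Set.mem_image, Finset.mem_coe, Finset.mem_range,
        Set.mem_inter_iff, Set.mem_Ioc, SetLike.mem_coe, hmem]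
      constructor
      · rintro ⟨⟨j, m, hj, rfl⟩, h1, h2⟩
        refine ⟨j, hj, ?_⟩
        have hm : (⌊((a.den:ℚ) - 1 - j) * a⌋ : ℤ) = m := by
          rw [Int.floor_eq_iff]
          constructor <;> push_cast <;> nlinarith
        rw [hf]
        simp only
        rw [hfl j hj, hm]
        push_cast; ring
      · rintro ⟨j, hj, rfl⟩
        have hfloor_le := Int.floor_le (((a.den:ℚ) - 1 - j) * a)
        have hlt := Int.sub_one_lt_floor (((a.den:ℚ) - 1 - j) * a)
        refine ⟨⟨j, ⌊((a.den:ℚ) - 1 - j) * a⌋.toNat, hj, by rw [hf]⟩, ?_, ?_⟩ <;>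
          rw [hf] <;> simp only <;> rw [hfl j hj] <;> nlinarith
    rw [hTeq, Set.encard_coe_eq_coe_finsetCard]
    rw [Finset.card_image_of_injOn, Finset.card_range]
    intro j hj j' hj' hjj'
    simp only [Finset.coe_range, Set.mem_Iio] at hj hj'
    exact bcdu_key a _ _ hj hj' hjj'
end

section
/- Suppose S ⊆ ℝ₊ is a subsemigroup of positive reals with smallest element s₀, and there exist c > 0 and d ∈ ℕ₊ with |S ∩ (0, n·s₀)| < c·n^d for all n ∈ ℕ. Then the rational rank of the subgroup of ℝ generated by S is at most d; equivalently, any d+1 elements of S are linearly dependent over ℚ. -/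
private lemma aux_nat_mul_mem (S : Set ℝ)
    (hadd : ∀ x ∈ S, ∀ y ∈ S, x + y ∈ S) :
    ∀ (k : ℕ) (x : ℝ), x ∈ S → ((k : ℝ) + 1) * x ∈ S := by
  intro k
  induction k with
  | zero => intro x hx; simpa using hx
  | succ k ih =>
      intro x hx
      have : (((k : ℝ) + 1) + 1) * x = ((k : ℝ) + 1) * x + x := by ring
      rw [Nat.cast_succ, this]
      exact hadd _ (ih x hx) x hx

private lemma aux_sum_mem (S : Set ℝ)
    (hadd : ∀ x ∈ S, ∀ y ∈ S, x + y ∈ S) {ι : Type*} (f : ι → ℝ)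
    (t : Finset ι) (ht : t.Nonempty) (hf : ∀ i ∈ t, f i ∈ S) :
    ∑ i ∈ t, f i ∈ S := by
  induction ht using Finset.Nonempty.cons_induction with
  | singleton a => simpa using hf a (by simp)
  | cons a s ha hs ih =>
      rw [Finset.sum_cons]
      exact hadd _ (hf a (by simp)) _ (ih (fun i hi => hf i (Finset.mem_cons_of_mem hi)))

/-- **Lemma 1, second part.** If `S ⊆ ℝ₊` is a subsemigroup with smallest element `s₀` and
`|S ∩ (0, n·s₀)| < c·n^d` for all `n ≥ 1` (some `c > 0`, `d ≥ 1`), then the rational rank of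
`S` is at most `d`: any `d+1` elements of `S` are linearly dependent over `ℚ`. -/
theorem polynomially_bounded_semigroup_ratRank_le
    (S : Set ℝ) (hpos : S ⊆ Set.Ioi 0)
    (hadd : ∀ x ∈ S, ∀ y ∈ S, x + y ∈ S)
    (s₀ : ℝ) (hs₀S : s₀ ∈ S) (hmin : ∀ x ∈ S, s₀ ≤ x)
    (c : ℝ) (hc : 0 < c) (d : ℕ) (hd : 0 < d)
    (hbound : ∀ n : ℕ, 1 ≤ n → (S ∩ Set.Ioo 0 (n * s₀)).Finite ∧
      ((S ∩ Set.Ioo 0 (n * s₀)).ncard : ℝ) < c * (n : ℝ) ^ d) :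
    ∀ γ : Fin (d + 1) → ℝ, (∀ i, γ i ∈ S) → ¬ LinearIndependent ℚ γ := by
  intro γ hγ hli
  have hs₀ : 0 < s₀ := hpos hs₀S
  set T : ℝ := ∑ i, γ i with hT
  have hγpos : ∀ i, 0 < γ i := fun i => hpos (hγ i)
  have hTpos : 0 < T := Finset.sum_pos (fun i _ => hγpos i) Finset.univ_nonempty
  set K : ℝ := T / s₀ + 2 with hK
  have hKpos : 0 < K := by positivity
  -- pick m large
  obtain ⟨m, hm⟩ := exists_nat_ge (max 1 (c * K ^ d))
  have hm1 : (1 : ℝ) ≤ m := le_trans (le_max_left _ _) hm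
  have hmcK : c * K ^ d ≤ m := le_trans (le_max_right _ _) hm
  have hm1' : 1 ≤ m := by exact_mod_cast hm1
  -- define n
  set n : ℕ := ⌈(m : ℝ) * T / s₀⌉₊ + 1 with hn
  have hn1 : 1 ≤ n := Nat.le_add_left 1 _
  have hmT : 0 ≤ (m : ℝ) * T / s₀ := by positivity
  have hnle : (n : ℝ) ≤ K * m := by
    have h1 : (⌈(m : ℝ) * T / s₀⌉₊ : ℝ) < (m : ℝ) * T / s₀ + 1 :=
      Nat.ceil_lt_add_one hmT
    have : (n : ℝ) = (⌈(m : ℝ) * T / s₀⌉₊ : ℝ) + 1 := by push_cast [hn]; ring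
    rw [this]
    have h2 : (m : ℝ) * T / s₀ + 2 ≤ K * m := by
      rw [hK]
      have heq : (m:ℝ) * T / s₀ = T / s₀ * m := by ring
      rw [heq]
      nlinarith
    linarith
  have hnT : (m : ℝ) * T < n * s₀ := by
    have h1 : (m : ℝ) * T / s₀ < n := by
      calc (m : ℝ) * T / s₀ ≤ ⌈(m : ℝ) * T / s₀⌉₊ := Nat.le_ceil _
        _ < n := by rw [hn]; push_cast; linarith
    calc (m : ℝ) * T = (m : ℝ) * T / s₀ * s₀ := by field_simp
      _ < n * s₀ := by exact mul_lt_mul_of_pos_right h1 hs₀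
  obtain ⟨hfin, hcard⟩ := hbound n hn1
  -- the map
  set F : (Fin (d + 1) → Fin m) → ℝ := fun a => ∑ i, ((a i : ℝ) + 1) * γ i with hF
  have hFmem : ∀ a, F a ∈ S ∩ Set.Ioo 0 (n * s₀) := by
    intro a
    have hS : F a ∈ S :=
      aux_sum_mem S hadd _ Finset.univ Finset.univ_nonempty
        (fun i _ => aux_nat_mul_mem S hadd (a i) (γ i) (hγ i))
    refine ⟨hS, hpos hS, ?_⟩
    have hle : F a ≤ (m : ℝ) * T := by
      rw [hT, Finset.mul_sum]
      refine Finset.sum_le_sum fun i _ => ?_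
      have : ((a i : ℝ) + 1) ≤ m := by
        have := (a i).is_lt
        have : ((a i : ℕ) : ℝ) + 1 ≤ m := by exact_mod_cast Nat.succ_le_of_lt this
        exact this
      exact mul_le_mul_of_nonneg_right this (hγpos i).le
    linarith
  have hFinj : Function.Injective F := by
    intro a b hab
    have hsum : ∑ i, ((((a i : ℕ) : ℚ) - ((b i : ℕ) : ℚ)) • γ i) = 0 := by
      have : ∑ i, (((a i : ℝ) - (b i : ℝ)) * γ i) = F a - F b := by
        rw [hF, ← Finset.sum_sub_distrib]; congr 1; ext i; ring
      rw [hab, sub_self] at this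
      rw [← this]
      congr 1; ext i
      rw [Rat.smul_def]
      push_cast
      ring
    have := Fintype.linearIndependent_iff.mp hli _ hsum
    funext i
    have hi := this i
    have : ((a i : ℕ) : ℚ) = ((b i : ℕ) : ℚ) := by linarith [sub_eq_zero.mp hi]
    exact Fin.val_injective (by exact_mod_cast this)
  -- counting
  have hcount : (m : ℝ) ^ (d + 1) ≤ ((S ∩ Set.Ioo 0 (n * s₀)).ncard : ℝ) := by
    have h1 : Fintype.card (Fin (d + 1) → Fin m) ≤ hfin.toFinset.card := by
      apply Finset.card_le_card_of_injOn F
      · intro a _; simp [Set.Finite.mem_toFinset]; exact hFmem a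
      · exact hFinj.injOn
    rw [Set.ncard_eq_toFinset_card _ hfin]
    have h2 : Fintype.card (Fin (d + 1) → Fin m) = m ^ (d + 1) := by
      simp [Fintype.card_fun]
    rw [h2] at h1
    exact_mod_cast h1
  have hKm : c * (n : ℝ) ^ d ≤ c * (K * m) ^ d := by
    apply mul_le_mul_of_nonneg_left _ hc.le
    exact pow_le_pow_left₀ (Nat.cast_nonneg n) hnle d
  have hfinal : c * (K * m) ^ d ≤ (m : ℝ) ^ (d + 1) := by
    have : c * (K * m) ^ d = (c * K ^ d) * m ^ d := by rw [mul_pow]; ring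
    rw [this, pow_succ]
    have : (c * K ^ d) * (m:ℝ) ^ d ≤ (m : ℝ) * (m:ℝ) ^ d :=
      mul_le_mul_of_nonneg_right hmcK (by positivity)
    linarith [this]
  linarith
end

section
/- Suppose S ⊆ ℝ₊ is a subsemigroup of positive reals with smallest element s₀, and there exists c > 0 such that |S ∩ (0, n·s₀)| < c·n for all n ∈ ℕ. Then S is finitely generated as a semigroup and the group generated by S is isomorphic to ℤ. -/
private lemma lbsfg_nsmul (S : Set ℝ) (hadd : ∀ x ∈ S, ∀ y ∈ S, x + y ∈ S)
    {x : ℝ} (hx : x ∈ S) : ∀ n : ℕ, ((n : ℝ) + 1) * x ∈ S := by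
  intro n
  induction n with
  | zero => simpa using hx
  | succ n ih =>
      have := hadd _ ih _ hx
      convert this using 1
      push_cast
      ring

private lemma lbsfg_rat (S : Set ℝ) (hpos : S ⊆ Set.Ioi 0)
    (hadd : ∀ x ∈ S, ∀ y ∈ S, x + y ∈ S)
    (s₀ : ℝ) (hs₀S : s₀ ∈ S)
    (c : ℝ) (hc : 0 < c)
    (hbound : ∀ n : ℕ, 1 ≤ n → (S ∩ Set.Ioo 0 (n * s₀)).Finite ∧
      ((S ∩ Set.Ioo 0 (n * s₀)).ncard : ℝ) < c * n)
    {x : ℝ} (hx : x ∈ S) :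
    ∃ p q : ℕ, 0 < q ∧ (q : ℝ) * x = (p : ℝ) * s₀ := by
  by_contra hcon
  push_neg at hcon
  have hs₀ : 0 < s₀ := hpos hs₀S
  have hx0 : 0 < x := hpos hx
  have key : ∀ i j i' j' : ℕ, i' < i →
      ((i : ℝ) + 1) * x + ((j : ℝ) + 1) * s₀ = ((i' : ℝ) + 1) * x + ((j' : ℝ) + 1) * s₀ →
      False := by
    intro i j i' j' hlt heq
    have hii : (i' : ℝ) < i := by exact_mod_cast hlt
    have h1 : ((i : ℝ) - i') * x = ((j' : ℝ) - j) * s₀ := by linarith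
    have h2 : (0:ℝ) < ((i : ℝ) - i') * x := mul_pos (by linarith) hx0
    have h3 : (j : ℝ) < j' := by nlinarith
    have hjj : j < j' := by exact_mod_cast h3
    have hcast1 : ((i - i' : ℕ) : ℝ) = (i : ℝ) - i' := by
      push_cast [Nat.cast_sub hlt.le]; ring
    have hcast2 : ((j' - j : ℕ) : ℝ) = (j' : ℝ) - j := by
      push_cast [Nat.cast_sub hjj.le]; ring
    exact hcon (j' - j) (i - i') (by omega) (by rw [hcast1, hcast2]; exact h1)
  have hinj : ∀ i j i' j' : ℕ,
      ((i : ℝ) + 1) * x + ((j : ℝ) + 1) * s₀ = ((i' : ℝ) + 1) * x + ((j' : ℝ) + 1) * s₀ →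
      i = i' ∧ j = j' := by
    intro i j i' j' heq
    have hi : i = i' := by
      rcases lt_trichotomy i i' with h | h | h
      · exact absurd (key i' j' i j h heq.symm) (fun f => f.elim)
      · exact h
      · exact absurd (key i j i' j' h heq) (fun f => f.elim)
    subst hi
    refine ⟨rfl, ?_⟩
    have h4 : ((j : ℝ) + 1) * s₀ = ((j' : ℝ) + 1) * s₀ := by linarith
    have h5 : (j : ℝ) + 1 = (j' : ℝ) + 1 := mul_right_cancel₀ (ne_of_gt hs₀) h4
    have : (j : ℝ) = j' := by linarith
    exact_mod_cast this
  -- counting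
  obtain ⟨m, hmub⟩ : ∃ m : ℕ, x + s₀ ≤ (m : ℝ) * s₀ := by
    refine ⟨⌈(x + s₀) / s₀⌉₊, ?_⟩
    have := Nat.le_ceil ((x + s₀) / s₀)
    rw [div_le_iff₀ hs₀] at this
    linarith
  obtain ⟨k, hk1, hkc⟩ : ∃ k : ℕ, 1 ≤ k ∧ c * m + c + 1 ≤ (k : ℝ) := by
    refine ⟨⌈c * m + c⌉₊ + 1, by omega, ?_⟩
    have := Nat.le_ceil (c * (m:ℝ) + c)
    push_cast
    linarith
  obtain ⟨n, hn1, hnval⟩ : ∃ n : ℕ, 1 ≤ n ∧ (n : ℝ) = (k : ℝ) * m + 1 :=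
    ⟨k * m + 1, by omega, by push_cast; ring⟩
  have hkr : (1:ℝ) ≤ k := by exact_mod_cast hk1
  set f : ℕ × ℕ → ℝ := fun ij => ((ij.1 : ℝ) + 1) * x + ((ij.2 : ℝ) + 1) * s₀ with hf
  set A : Finset ℝ := (Finset.range k ×ˢ Finset.range k).image f with hA
  have hcard : A.card = k * k := by
    rw [hA, Finset.card_image_of_injOn, Finset.card_product, Finset.card_range]
    intro a _ b _ hab
    have := hinj a.1 a.2 b.1 b.2 hab
    exact Prod.ext this.1 this.2
  have hsub : (A : Set ℝ) ⊆ S ∩ Set.Ioo 0 ((n : ℝ) * s₀) := by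
    intro y hy
    simp only [hA, Finset.coe_image, Set.mem_image, Finset.mem_coe, Finset.mem_product,
      Finset.mem_range] at hy
    obtain ⟨⟨i, j⟩, ⟨hi, hj⟩, rfl⟩ := hy
    have hiS : ((i : ℝ) + 1) * x ∈ S := lbsfg_nsmul S hadd hx i
    have hjS : ((j : ℝ) + 1) * s₀ ∈ S := lbsfg_nsmul S hadd hs₀S j
    refine ⟨hadd _ hiS _ hjS, hpos (hadd _ hiS _ hjS), ?_⟩
    have h1 : ((i : ℝ) + 1) ≤ k := by exact_mod_cast hi
    have h2 : ((j : ℝ) + 1) ≤ k := by exact_mod_cast hj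
    have hval : ((i : ℝ) + 1) * x + ((j : ℝ) + 1) * s₀ ≤ (k : ℝ) * (x + s₀) := by nlinarith
    have hbig : (k : ℝ) * (x + s₀) ≤ (k : ℝ) * m * s₀ := by nlinarith
    have hns : (n : ℝ) * s₀ = (k : ℝ) * m * s₀ + s₀ := by rw [hnval]; ring
    show ((i : ℝ) + 1) * x + ((j : ℝ) + 1) * s₀ < (n : ℝ) * s₀
    linarith
  obtain ⟨hfin, hlt⟩ := hbound n hn1
  have hcount : ((k : ℝ) * k : ℝ) ≤ ((S ∩ Set.Ioo 0 ((n : ℝ) * s₀)).ncard : ℝ) := by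
    have h1 : (A : Set ℝ).ncard ≤ (S ∩ Set.Ioo 0 ((n : ℝ) * s₀)).ncard :=
      Set.ncard_le_ncard hsub hfin
    rw [Set.ncard_coe_finset, hcard] at h1
    exact_mod_cast h1
  have hmn : (0:ℝ) ≤ m := Nat.cast_nonneg m
  have h1 : (k:ℝ) * (c * m + c + 1) ≤ (k:ℝ) * k :=
    mul_le_mul_of_nonneg_left hkc (by positivity)
  have h2 : c * ((k:ℝ) * m + 1) ≤ (k:ℝ) * (c * m + c + 1) := by nlinarith
  have hcn : c * (n:ℝ) = c * ((k:ℝ) * m + 1) := by rw [hnval]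
  linarith

set_option maxHeartbeats 1600000 in
private lemma lbsfg_denom (S : Set ℝ) (hpos : S ⊆ Set.Ioi 0)
    (hadd : ∀ x ∈ S, ∀ y ∈ S, x + y ∈ S)
    (s₀ : ℝ) (hs₀S : s₀ ∈ S)
    (c : ℝ) (hc : 0 < c)
    (hbound : ∀ n : ℕ, 1 ≤ n → (S ∩ Set.Ioo 0 (n * s₀)).Finite ∧
      ((S ∩ Set.Ioo 0 (n * s₀)).ncard : ℝ) < c * n)
    {x : ℝ} (hx : x ∈ S)
    (hrat : ∃ p q : ℕ, 0 < q ∧ (q : ℝ) * x = (p : ℝ) * s₀) :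
    ∃ p q : ℕ, 0 < p ∧ 0 < q ∧ (q : ℝ) * x = (p : ℝ) * s₀ ∧ (q : ℝ) ≤ c := by
  classical
  have hs₀ : 0 < s₀ := hpos hs₀S
  have hx0 : 0 < x := hpos hx
  have hex : ∃ q : ℕ, 0 < q ∧ ∃ p : ℕ, (q : ℝ) * x = (p : ℝ) * s₀ := by
    obtain ⟨p, q, hq, h⟩ := hrat
    exact ⟨q, hq, p, h⟩
  have hPQ : ∃ p q : ℕ, 0 < q ∧ ((q : ℝ) * x = (p : ℝ) * s₀) ∧ Nat.Coprime p q := by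
    set q := Nat.find hex with hqdef
    obtain ⟨hq0, p, hpq⟩ := Nat.find_spec hex
    refine ⟨p, q, hq0, hpq, ?_⟩
    by_contra hncop
    set g := Nat.gcd p q with hg
    have hgpos : 0 < g := Nat.gcd_pos_of_pos_right p hq0
    have hgne : g ≠ 1 := hncop
    have hg1 : 1 < g := by omega
    have hgq : g ∣ q := Nat.gcd_dvd_right p q
    have hgp : g ∣ p := Nat.gcd_dvd_left p q
    have hq' : 0 < q / g := Nat.div_pos (Nat.le_of_dvd hq0 hgq) (by omega)
    have hqg : ((q / g : ℕ) : ℝ) * x = ((p / g : ℕ) : ℝ) * s₀ := by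
      have e1 : (g : ℝ) * ((q / g : ℕ) : ℝ) = (q : ℝ) := by
        rw [← Nat.cast_mul, Nat.mul_div_cancel' hgq]
      have e2 : (g : ℝ) * ((p / g : ℕ) : ℝ) = (p : ℝ) := by
        rw [← Nat.cast_mul, Nat.mul_div_cancel' hgp]
      have h1 : (g : ℝ) * (((q / g : ℕ) : ℝ) * x) = (g : ℝ) * (((p / g : ℕ) : ℝ) * s₀) := by
        rw [← mul_assoc, e1, ← mul_assoc, e2]
        exact hpq
      exact mul_left_cancel₀ (by positivity) h1
    exact Nat.find_min hex (Nat.div_lt_self hq0 hg1) ⟨hq', p / g, hqg⟩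
  obtain ⟨p, q, hq0, hpq, hcop⟩ := hPQ
  have hp0 : 0 < p := by
    by_contra h
    push_neg at h
    interval_cases p
    simp only [Nat.cast_zero, zero_mul] at hpq
    have : (0:ℝ) < (q:ℝ) * x := by positivity
    nlinarith
  refine ⟨p, q, hp0, hq0, hpq, ?_⟩
  by_contra hqc
  push_neg at hqc
  have hq' : (0:ℝ) < q := by exact_mod_cast hq0
  -- injectivity
  have keylt : ∀ i j i' j' : ℕ, i < i' → i' < q →
      ((i : ℝ) + 1) * x + ((j : ℝ) + 1) * s₀ = ((i' : ℝ) + 1) * x + ((j' : ℝ) + 1) * s₀ →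
      False := by
    intro i j i' j' hlt hi' heq
    have hmul : ((i : ℝ) + 1) * ((q:ℝ) * x) + ((j : ℝ) + 1) * ((q:ℝ) * s₀)
        = ((i' : ℝ) + 1) * ((q:ℝ) * x) + ((j' : ℝ) + 1) * ((q:ℝ) * s₀) := by
      nlinarith [heq]
    rw [hpq] at hmul
    have hnat : p * (i + 1) + q * (j + 1) = p * (i' + 1) + q * (j' + 1) := by
      have h0 : ((p * (i + 1) + q * (j + 1) : ℕ) : ℝ) * s₀
          = ((p * (i' + 1) + q * (j' + 1) : ℕ) : ℝ) * s₀ := by push_cast; nlinarith [hmul]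
      have h2 := mul_right_cancel₀ (ne_of_gt hs₀) h0
      exact_mod_cast h2
    have e1 : p * (i + 1) + p * (i' - i) = p * (i' + 1) := by
      rw [← Nat.left_distrib]
      congr 1
      omega
    have e2 : q * (j + 1) = p * (i' - i) + q * (j' + 1) := by
      apply Nat.add_left_cancel (n := p * (i + 1))
      rw [← Nat.add_assoc, e1]
      exact hnat
    have hjj : j' + 1 ≤ j + 1 := by
      have : q * (j' + 1) ≤ q * (j + 1) := by omega
      exact Nat.le_of_mul_le_mul_left this hq0
    have e3 : q * (j - j') + q * (j' + 1) = q * (j + 1) := by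
      rw [← Nat.left_distrib]
      congr 1
      omega
    have e4 : p * (i' - i) = q * (j - j') := by omega
    have hdvd : q ∣ p * (i' - i) := ⟨j - j', e4⟩
    have hdvd2 : q ∣ (i' - i) := (Nat.Coprime.dvd_of_dvd_mul_left hcop.symm hdvd)
    have h5 : q ≤ i' - i := Nat.le_of_dvd (by omega) hdvd2
    omega
  have hinj : ∀ i j i' j' : ℕ, i < q → i' < q →
      ((i : ℝ) + 1) * x + ((j : ℝ) + 1) * s₀ = ((i' : ℝ) + 1) * x + ((j' : ℝ) + 1) * s₀ →
      i = i' ∧ j = j' := by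
    intro i j i' j' hi hi' heq
    have hieq : i = i' := by
      rcases lt_trichotomy i i' with h | h | h
      · exact absurd (keylt i j i' j' h hi' heq) (fun f => f.elim)
      · exact h
      · exact absurd (keylt i' j' i j h hi heq.symm) (fun f => f.elim)
    subst hieq
    refine ⟨rfl, ?_⟩
    have h4 : ((j : ℝ) + 1) * s₀ = ((j' : ℝ) + 1) * s₀ := by linarith
    have h5 : (j : ℝ) + 1 = (j' : ℝ) + 1 := mul_right_cancel₀ (ne_of_gt hs₀) h4
    have : (j : ℝ) = j' := by linarith
    exact_mod_cast this
  -- counting: for every n ≥ p + 2, q * (n - p - 1) < c * n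
  have hcount : ∀ n : ℕ, p + 2 ≤ n → (q:ℝ) * ((n:ℝ) - p - 1) < c * n := by
    intro n hnp
    set B : ℕ := n - p - 1 with hB
    have hB1 : 1 ≤ B := by omega
    have hBr : (B:ℝ) = (n:ℝ) - p - 1 := by
      have h0 : B + (p + 1) = n := by omega
      have := congrArg (fun t : ℕ => (t : ℝ)) h0
      push_cast at this
      linarith
    set f : ℕ × ℕ → ℝ := fun ij => ((ij.1 : ℝ) + 1) * x + ((ij.2 : ℝ) + 1) * s₀ with hf
    set A : Finset ℝ := (Finset.range q ×ˢ Finset.range B).image f with hA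
    have hcard : A.card = q * B := by
      rw [hA, Finset.card_image_of_injOn, Finset.card_product, Finset.card_range,
        Finset.card_range]
      intro a ha b hb hab
      simp only [Finset.mem_coe, Finset.mem_product, Finset.mem_range] at ha hb
      have := hinj a.1 a.2 b.1 b.2 ha.1 hb.1 hab
      exact Prod.ext this.1 this.2
    have hsub : (A : Set ℝ) ⊆ S ∩ Set.Ioo 0 ((n : ℝ) * s₀) := by
      intro y hy
      simp only [hA, Finset.coe_image, Set.mem_image, Finset.mem_coe, Finset.mem_product,
        Finset.mem_range] at hy
      obtain ⟨⟨i, j⟩, ⟨hi, hj⟩, rfl⟩ := hy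
      have hiS : ((i : ℝ) + 1) * x ∈ S := lbsfg_nsmul S hadd hx i
      have hjS : ((j : ℝ) + 1) * s₀ ∈ S := lbsfg_nsmul S hadd hs₀S j
      refine ⟨hadd _ hiS _ hjS, hpos (hadd _ hiS _ hjS), ?_⟩
      have h1 : ((i : ℝ) + 1) ≤ q := by exact_mod_cast hi
      have h2 : ((j : ℝ) + 1) ≤ B := by exact_mod_cast hj
      have hvx : ((i : ℝ) + 1) * x ≤ (q:ℝ) * x := by nlinarith
      have hvs : ((j : ℝ) + 1) * s₀ ≤ (B:ℝ) * s₀ := by nlinarith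
      show ((i : ℝ) + 1) * x + ((j : ℝ) + 1) * s₀ < (n : ℝ) * s₀
      rw [hpq] at hvx
      rw [hBr] at hvs
      nlinarith
    have hn1 : 1 ≤ n := by omega
    obtain ⟨hfin, hlt⟩ := hbound n hn1
    have h1 : (A : Set ℝ).ncard ≤ (S ∩ Set.Ioo 0 ((n : ℝ) * s₀)).ncard :=
      Set.ncard_le_ncard hsub hfin
    rw [Set.ncard_coe_finset, hcard] at h1
    have h2 : ((q * B : ℕ) : ℝ) ≤ ((S ∩ Set.Ioo 0 ((n : ℝ) * s₀)).ncard : ℝ) := by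
      exact_mod_cast h1
    push_cast at h2
    rw [hBr] at h2
    linarith
  -- choose n large and contradict
  set D : ℝ := (q:ℝ) - c with hD
  have hD0 : 0 < D := by simp [hD]; linarith
  obtain ⟨n, hn2, hnD⟩ : ∃ n : ℕ, p + 2 ≤ n ∧ (q:ℝ) * (p + 1) ≤ D * n := by
    refine ⟨p + 2 + ⌈(q:ℝ) * (p + 1) / D⌉₊, by omega, ?_⟩
    have h1 : (q:ℝ) * (p + 1) / D ≤ ⌈(q:ℝ) * (p + 1) / D⌉₊ := Nat.le_ceil _
    have h2 : (⌈(q:ℝ) * (p + 1) / D⌉₊ : ℝ) ≤ ((p + 2 + ⌈(q:ℝ) * (p + 1) / D⌉₊ : ℕ) : ℝ) := by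
      push_cast
      linarith [(Nat.cast_nonneg p : (0:ℝ) ≤ (p:ℝ))]
    have h3 := (div_le_iff₀ hD0).mp (le_trans h1 h2)
    linarith [h3]
  have := hcount n hn2
  have hnn : (0:ℝ) ≤ n := Nat.cast_nonneg n
  nlinarith [this]

private lemma lbsfg_frob : ∀ (F : Finset ℕ), 0 ∉ F →
    ∃ C : ℕ, 0 < C ∧ ∀ m : ℕ, C ≤ m → F.gcd id ∣ m → m ∈ AddSubmonoid.closure (F : Set ℕ) := by
  intro F
  induction F using Finset.induction_on with
  | empty =>
      intro _
      refine ⟨1, by omega, ?_⟩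
      intro m hm hdvd
      simp only [Finset.gcd_empty] at hdvd
      omega
  | @insert a F ha ih =>
      intro h0
      have ha0 : a ≠ 0 := fun h => h0 (by simp [h])
      have h0F : 0 ∉ F := fun h => h0 (Finset.mem_insert_of_mem h)
      obtain ⟨C, hC0, hC⟩ := ih h0F
      set g := F.gcd id with hg
      have hgins : (insert a F).gcd id = Nat.gcd a g := by
        rw [Finset.gcd_insert]
        rfl
      by_cases hgz : g = 0
      · -- F is effectively empty for divisibility: gcd is a
        refine ⟨1, by omega, ?_⟩
        intro m hm hdvd
        rw [hgins, hgz, Nat.gcd_zero_right] at hdvd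
        obtain ⟨k, rfl⟩ := hdvd
        have hac : a ∈ AddSubmonoid.closure ((insert a F : Finset ℕ) : Set ℕ) :=
          AddSubmonoid.subset_closure (by simp)
        have := AddSubmonoid.nsmul_mem (AddSubmonoid.closure ((insert a F : Finset ℕ) : Set ℕ)) hac k
        simpa [smul_eq_mul, Nat.mul_comm] using this
      · have hgpos : 0 < g := Nat.pos_of_ne_zero hgz
        refine ⟨C + g * a, by positivity, ?_⟩
        intro m hm hdvd
        rw [hgins] at hdvd
        obtain ⟨m₁, hm₁⟩ := hdvd
        -- Bezout
        have hbez : (Nat.gcd a g : ℤ) = a * Nat.gcdA a g + g * Nat.gcdB a g :=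
          Nat.gcd_eq_gcd_ab a g
        set A : ℤ := Nat.gcdA a g * m₁ with hA
        set a₀ : ℤ := A % (g : ℤ) with ha₀
        have hgz' : (g : ℤ) ≠ 0 := by exact_mod_cast hgz
        have ha₀nn : 0 ≤ a₀ := Int.emod_nonneg A hgz'
        have ha₀lt : a₀ < (g : ℤ) := Int.emod_lt_of_pos A (by exact_mod_cast hgpos)
        have hdvd1 : (g : ℤ) ∣ (A - a₀) := Int.dvd_self_sub_of_emod_eq rfl
        have hmz : (m : ℤ) = a * A + g * (Nat.gcdB a g * m₁) := by
          have : (m : ℤ) = (Nat.gcd a g : ℤ) * m₁ := by exact_mod_cast hm₁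
          rw [this, hbez]
          ring
        have hdvd2 : (g : ℤ) ∣ ((m : ℤ) - a₀ * a) := by
          have : (m : ℤ) - a₀ * a = (A - a₀) * a + g * (Nat.gcdB a g * m₁) := by
            rw [hmz]; ring
          rw [this]
          exact dvd_add (Dvd.dvd.mul_right hdvd1 a) ⟨_, rfl⟩
        set aN : ℕ := a₀.toNat with haN
        have haNlt : aN < g := by omega
        have haNa : aN * a ≤ m - C := by
          have h1 : aN * a ≤ (g - 1) * a := Nat.mul_le_mul_right a (by omega)
          have h2 : (g - 1) * a + a = g * a := by
            have : g - 1 + 1 = g := by omega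
            calc (g - 1) * a + a = (g - 1 + 1) * a := by ring
            _ = g * a := by rw [this]
          omega
        set r : ℕ := m - aN * a with hr
        have hrC : C ≤ r := by omega
        have hrcast : (r : ℤ) = (m : ℤ) - a₀ * a := by
          have h1 : aN * a ≤ m := by omega
          have h2 : (aN : ℤ) = a₀ := Int.toNat_of_nonneg ha₀nn
          push_cast [hr, Nat.cast_sub h1]
          rw [h2]
        have hgr : g ∣ r := by
          have : (g : ℤ) ∣ (r : ℤ) := by rw [hrcast]; exact hdvd2
          exact_mod_cast this
        have hrmem : r ∈ AddSubmonoid.closure (F : Set ℕ) := hC r hrC hgr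
        have hrmem' : r ∈ AddSubmonoid.closure ((insert a F : Finset ℕ) : Set ℕ) := by
          apply AddSubmonoid.closure_mono _ hrmem
          intro t ht
          simp only [Finset.coe_insert, Set.mem_insert_iff]
          exact Or.inr ht
        have hac : a ∈ AddSubmonoid.closure ((insert a F : Finset ℕ) : Set ℕ) :=
          AddSubmonoid.subset_closure (by simp)
        have hsum := AddSubmonoid.add_mem _
          (AddSubmonoid.nsmul_mem _ hac aN) hrmem'
        have hmeq : aN • a + r = m := by
          simp only [smul_eq_mul]
          omega
        rwa [hmeq] at hsum

private lemma lbsfg_mingcd (T : Set ℕ) (hT : ∀ t ∈ T, 0 < t) (hne : T.Nonempty) :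
    ∃ (F : Finset ℕ), ↑F ⊆ T ∧ F.Nonempty ∧ (0 ∉ F) ∧ ∀ t ∈ T, F.gcd id ∣ t := by
  classical
  obtain ⟨t₀, ht₀⟩ := hne
  have hex : ∃ g : ℕ, ∃ F : Finset ℕ, ↑F ⊆ T ∧ F.Nonempty ∧ F.gcd id = g := by
    refine ⟨t₀, {t₀}, by simpa using ht₀, ⟨t₀, Finset.mem_singleton_self t₀⟩, ?_⟩
    simp
  set g := Nat.find hex with hgdef
  obtain ⟨F, hFT, hFne, hFg⟩ := Nat.find_spec hex
  rw [← hgdef] at hFg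
  have h0F : 0 ∉ F := fun h => by
    have := hT 0 (hFT h)
    omega
  refine ⟨F, hFT, hFne, h0F, ?_⟩
  have hgpos : 0 < g := by
    rcases Nat.eq_zero_or_pos g with h | h
    · exfalso
      rw [h] at hFg
      obtain ⟨b, hb⟩ := hFne
      have hb0 : (id b : ℕ) = 0 := by
        have := Finset.gcd_eq_zero_iff.mp hFg
        exact this b hb
      exact h0F (by simpa using hb0 ▸ hb)
    · exact h
  intro t ht
  rw [hFg]
  by_contra hnd
  have hlt : Nat.gcd t g < g := by
    have h1 : Nat.gcd t g ∣ g := Nat.gcd_dvd_right t g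
    have h2 : Nat.gcd t g ≠ g := fun h => hnd (h ▸ Nat.gcd_dvd_left t g)
    exact lt_of_le_of_ne (Nat.le_of_dvd hgpos h1) h2
  apply Nat.find_min hex hlt
  refine ⟨insert t F, ?_, ⟨t, Finset.mem_insert_self t F⟩, ?_⟩
  · intro y hy
    rcases Finset.mem_insert.mp hy with h | h
    · exact h ▸ ht
    · exact hFT h
  · rw [Finset.gcd_insert, hFg]
    rfl

set_option maxHeartbeats 1600000 in
/-- **Lemma 2.** If `S ⊆ ℝ₊` is a subsemigroup with smallest element `s₀` and there is `c > 0`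
with `|S ∩ (0, n·s₀)| < c·n` for all `n ≥ 1`, then `S` is finitely generated as a semigroup
and the group generated by `S` is isomorphic to `ℤ`. -/
theorem linearly_bounded_semigroup_finitelyGenerated
    (S : Set ℝ) (hpos : S ⊆ Set.Ioi 0)
    (hadd : ∀ x ∈ S, ∀ y ∈ S, x + y ∈ S)
    (s₀ : ℝ) (hs₀S : s₀ ∈ S) (hmin : ∀ x ∈ S, s₀ ≤ x)
    (c : ℝ) (hc : 0 < c)
    (hbound : ∀ n : ℕ, 1 ≤ n → (S ∩ Set.Ioo 0 (n * s₀)).Finite ∧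
      ((S ∩ Set.Ioo 0 (n * s₀)).ncard : ℝ) < c * n) :
    (∃ F : Finset ℝ, (F : Set ℝ) ⊆ S ∧
      (AddSubsemigroup.closure (F : Set ℝ) : Set ℝ) = S) ∧
    Nonempty (AddSubgroup.closure S ≃+ ℤ) := by
  classical
  have hs₀ : 0 < s₀ := hpos hs₀S
  -- c ≥ 1
  have hc1 : (1:ℝ) ≤ c := by
    obtain ⟨p, q, hp0, hq0, hpq, hqc⟩ :=
      lbsfg_denom S hpos hadd s₀ hs₀S c hc hbound hs₀S
        (lbsfg_rat S hpos hadd s₀ hs₀S c hc hbound hs₀S)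
    have : (1:ℝ) ≤ q := by exact_mod_cast hq0
    linarith
  set Q : ℕ := ⌊c⌋₊ with hQdef
  have hQ1 : 1 ≤ Q := Nat.le_floor (by exact_mod_cast hc1)
  set Qf : ℕ := Nat.factorial Q with hQfdef
  have hQf0 : 0 < Qf := Nat.factorial_pos Q
  have hQfR : (0:ℝ) < (Qf:ℝ) := by exact_mod_cast hQf0
  set d₀ : ℝ := s₀ / Qf with hd₀def
  have hd₀ : 0 < d₀ := by positivity
  -- every element of S is a positive multiple of d₀
  have hmem₀ : ∀ x ∈ S, ∃ k : ℕ, 0 < k ∧ x = (k:ℝ) * d₀ := by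
    intro x hx
    obtain ⟨p, q, hp0, hq0, hpq, hqc⟩ :=
      lbsfg_denom S hpos hadd s₀ hs₀S c hc hbound hx
        (lbsfg_rat S hpos hadd s₀ hs₀S c hc hbound hx)
    have hq' : (0:ℝ) < q := by exact_mod_cast hq0
    have hqQ : q ≤ Q := Nat.le_floor hqc
    have hqdvd : q ∣ Qf := Nat.dvd_factorial hq0 hqQ
    refine ⟨p * (Qf / q), by
      have : 0 < Qf / q := Nat.div_pos (Nat.le_of_dvd hQf0 hqdvd) hq0
      positivity, ?_⟩
    have e1 : ((Qf / q : ℕ) : ℝ) * q = (Qf:ℝ) := by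
      rw [← Nat.cast_mul, Nat.div_mul_cancel hqdvd]
    have e2 : ((p * (Qf / q) : ℕ) : ℝ) * d₀ * q = x * q := by
      calc ((p * (Qf / q) : ℕ) : ℝ) * d₀ * q
          = (p:ℝ) * (((Qf / q : ℕ) : ℝ) * q) * (s₀ / Qf) := by push_cast [hd₀def]; ring
        _ = (p:ℝ) * (Qf:ℝ) * (s₀ / Qf) := by rw [e1]
        _ = (p:ℝ) * s₀ := by field_simp; try ring
        _ = (q:ℝ) * x := hpq.symm
        _ = x * q := by ring
    have := mul_right_cancel₀ (ne_of_gt hq') e2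
    exact this.symm
  -- the semigroup of multipliers
  set T₀ : Set ℕ := {k | 0 < k ∧ (k:ℝ) * d₀ ∈ S} with hT₀def
  obtain ⟨ks, hks0, hksd⟩ := hmem₀ s₀ hs₀S
  have hksT : ks ∈ T₀ := ⟨hks0, by rw [← hksd]; exact hs₀S⟩
  obtain ⟨F₀, hF₀T, hF₀ne, h0F₀, hFdvd⟩ :=
    lbsfg_mingcd T₀ (fun t ht => ht.1) ⟨ks, hksT⟩
  set g : ℕ := F₀.gcd id with hgdef
  have hgpos : 0 < g := by
    rcases Nat.eq_zero_or_pos g with h | h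
    · exfalso
      obtain ⟨b, hb⟩ := hF₀ne
      have hb0 : (id b : ℕ) = 0 := Finset.gcd_eq_zero_iff.mp h b hb
      exact h0F₀ (by simpa using hb0 ▸ hb)
    · exact h
  obtain ⟨C, hC0, hCmem⟩ := lbsfg_frob F₀ h0F₀
  set d : ℝ := (g:ℝ) * d₀ with hddef
  have hgR : (0:ℝ) < g := by exact_mod_cast hgpos
  have hd : 0 < d := by positivity
  -- nonzero elements of the closure of F₀ are in T₀
  have hclos : ∀ m ∈ AddSubmonoid.closure (F₀ : Set ℕ), m = 0 ∨ m ∈ T₀ := by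
    intro m hm
    induction hm using AddSubmonoid.closure_induction with
    | mem y hy => exact Or.inr (hF₀T hy)
    | zero => exact Or.inl rfl
    | add y z hy hz ihy ihz =>
        rcases ihy with h | h
        · rcases ihz with h' | h'
          · exact Or.inl (by omega)
          · exact Or.inr (by simpa [h] using h')
        · rcases ihz with h' | h'
          · exact Or.inr (by simpa [h'] using h)
          · refine Or.inr ⟨Nat.add_pos_left h.1 z, ?_⟩
            have := hadd _ h.2 _ h'.2
            convert this using 1
            push_cast
            ring
  -- all large multiples of d are in S
  have hbig : ∀ j : ℕ, C ≤ j → (j:ℝ) * d ∈ S := by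
    intro j hj
    have h1 : C ≤ g * j := le_trans hj (Nat.le_mul_of_pos_left j hgpos)
    have h2 : g ∣ g * j := dvd_mul_right g j
    have h3 := hCmem (g * j) h1 h2
    rcases hclos _ h3 with h | h
    · exfalso; omega
    · have h4 : ((g * j : ℕ) : ℝ) * d₀ ∈ S := h.2
      convert h4 using 1
      push_cast [hddef]
      ring
  -- every element of S is a positive multiple of d
  have hmem : ∀ x ∈ S, ∃ k : ℕ, 0 < k ∧ x = (k:ℝ) * d := by
    intro x hx
    obtain ⟨k₀, hk₀, hx0⟩ := hmem₀ x hx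
    have hk₀T : k₀ ∈ T₀ := ⟨hk₀, by rw [← hx0]; exact hx⟩
    have hdv : g ∣ k₀ := hFdvd k₀ hk₀T
    refine ⟨k₀ / g, Nat.div_pos (Nat.le_of_dvd hk₀ hdv) hgpos, ?_⟩
    rw [hx0]
    have e1 : ((k₀ / g : ℕ) : ℝ) * g = (k₀:ℝ) := by
      rw [← Nat.cast_mul, Nat.div_mul_cancel hdv]
    calc (k₀:ℝ) * d₀ = ((k₀ / g : ℕ) : ℝ) * g * d₀ := by rw [e1]
      _ = ((k₀ / g : ℕ) : ℝ) * d := by rw [hddef]; ring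
  obtain ⟨N₀, hN₀pos, hs₀d⟩ := hmem s₀ hs₀S
  have hN₀R : (1:ℝ) ≤ (N₀:ℝ) := by exact_mod_cast hN₀pos
  have hds₀ : d ≤ s₀ := by rw [hs₀d]; nlinarith
  set K : ℕ := C + N₀ with hKdef
  -- the finite generating set
  have hfinS : (S ∩ Set.Iic ((K:ℝ) * d)).Finite := by
    apply ((hbound (K + 1) (by omega)).1).subset
    rintro x ⟨hxS, hxle⟩
    refine ⟨hxS, hpos hxS, ?_⟩
    have h1 : (K:ℝ) * d ≤ (K:ℝ) * s₀ := by
      have : (0:ℝ) ≤ (K:ℝ) := Nat.cast_nonneg K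
      nlinarith
    have h2 : ((K + 1 : ℕ):ℝ) * s₀ = (K:ℝ) * s₀ + s₀ := by push_cast; ring
    simp only [Set.mem_Iic] at hxle
    rw [h2]
    linarith
  set F : Finset ℝ := hfinS.toFinset with hFdef
  have hFcoe : (F : Set ℝ) = S ∩ Set.Iic ((K:ℝ) * d) := Set.Finite.coe_toFinset hfinS
  have hFS : (F : Set ℝ) ⊆ S := by rw [hFcoe]; exact Set.inter_subset_left
  -- the closure equals S
  constructor
  · refine ⟨F, hFS, ?_⟩
    apply Set.Subset.antisymm
    · intro x hx
      set Ssg : AddSubsemigroup ℝ := ⟨S, fun {a b} ha hb => hadd a ha b hb⟩ with hSsg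
      have hle : AddSubsemigroup.closure (F : Set ℝ) ≤ Ssg :=
        AddSubsemigroup.closure_le.mpr hFS
      exact hle hx
    · intro x hx
      obtain ⟨k, hk0, rfl⟩ := hmem x hx
      -- strong induction on k
      have key : ∀ k : ℕ, (k:ℝ) * d ∈ S → (k:ℝ) * d ∈ AddSubsemigroup.closure (F : Set ℝ) := by
        intro k
        induction k using Nat.strong_induction_on with
        | _ k ih =>
          intro hkS
          by_cases hk : k ≤ K
          · apply AddSubsemigroup.subset_closure
            rw [hFcoe]
            refine ⟨hkS, ?_⟩
            simp only [Set.mem_Iic]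
            have : (k:ℝ) ≤ K := by exact_mod_cast hk
            nlinarith
          · push_neg at hk
            have hN₀K : N₀ ≤ k := by omega
            have hjC : C ≤ k - N₀ := by omega
            have hjS : ((k - N₀ : ℕ):ℝ) * d ∈ S := hbig _ hjC
            have hjcl := ih (k - N₀) (by omega) hjS
            have hs₀cl : s₀ ∈ AddSubsemigroup.closure (F : Set ℝ) := by
              apply AddSubsemigroup.subset_closure
              rw [hFcoe]
              refine ⟨hs₀S, ?_⟩
              simp only [Set.mem_Iic]
              rw [hs₀d]
              have h1 : (N₀:ℝ) ≤ K := by exact_mod_cast (by omega : N₀ ≤ K)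
              nlinarith
            have hsum := AddSubsemigroup.add_mem _ hjcl hs₀cl
            have heq : ((k - N₀ : ℕ):ℝ) * d + s₀ = (k:ℝ) * d := by
              rw [hs₀d]
              push_cast [Nat.cast_sub hN₀K]
              ring
            rwa [heq] at hsum
      exact key _ hx
  · -- the group part
    have hSsub : S ⊆ (AddSubgroup.zmultiples d : Set ℝ) := by
      intro x hx
      obtain ⟨k, _, rfl⟩ := hmem x hx
      exact AddSubgroup.mem_zmultiples_iff.mpr ⟨(k:ℤ), by push_cast [zsmul_eq_mul]; ring⟩
    have hle1 : AddSubgroup.closure S ≤ AddSubgroup.zmultiples d :=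
      (AddSubgroup.closure_le _).mpr hSsub
    have hdmem : d ∈ AddSubgroup.closure S := by
      have ha : ((C + 1 : ℕ):ℝ) * d ∈ S := hbig (C + 1) (by omega)
      have hb : ((C : ℕ):ℝ) * d ∈ S := hbig C le_rfl
      have h1 := sub_mem (AddSubgroup.subset_closure ha) (AddSubgroup.subset_closure hb)
      have h2 : ((C + 1 : ℕ):ℝ) * d - ((C : ℕ):ℝ) * d = d := by push_cast; ring
      rwa [h2] at h1
    have hle2 : AddSubgroup.zmultiples d ≤ AddSubgroup.closure S :=
      AddSubgroup.zmultiples_le_of_mem hdmem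
    have hEq : AddSubgroup.closure S = AddSubgroup.zmultiples d := le_antisymm hle1 hle2
    -- ℤ ≃+ zmultiples d
    have hdne : d ≠ 0 := ne_of_gt hd
    set φ : ℤ →+ AddSubgroup.zmultiples d :=
      { toFun := fun n => ⟨n • d, AddSubgroup.mem_zmultiples_iff.mpr ⟨n, rfl⟩⟩
        map_zero' := Subtype.ext (by simp)
        map_add' := fun a b => Subtype.ext (by simp only [zsmul_eq_mul]; push_cast; ring) } with hφ
    have hbij : Function.Bijective φ := by
      constructor
      · intro a b hab
        have h1 : a • d = b • d := congrArg Subtype.val hab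
        rw [zsmul_eq_mul, zsmul_eq_mul] at h1
        have := mul_right_cancel₀ hdne h1
        exact_mod_cast this
      · rintro ⟨y, hy⟩
        obtain ⟨k, hk⟩ := AddSubgroup.mem_zmultiples_iff.mp hy
        exact ⟨k, Subtype.ext hk⟩
    exact ⟨(AddEquiv.addSubgroupCongr hEq).trans (AddEquiv.ofBijective φ hbij).symm⟩
end

section
/- Suppose S ⊆ ℚ₊ is a subsemigroup with smallest element 1 that is not finitely generated. Then for every e ∈ ℕ and every c > 0 there exists n ∈ ℕ with |S ∩ (0, n)| ≥ e·n − e·n₀ for some fixed n₀ depending on e; in particular, there is no c > 0 with |S ∩ (0, n)| < c·n for all n ∈ ℕ. -/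
private lemma den_add_nat (q : ℚ) (k : ℕ) : (q + (k : ℚ)).den = q.den := by
  have hb0 : (0:ℤ) < (q.den : ℤ) := by exact_mod_cast q.pos
  have hdq : ((q.den : ℚ)) ≠ 0 := Nat.cast_ne_zero.mpr q.den_nz
  have hnum : (q.num : ℚ) = q * q.den := by
    have h := Rat.num_div_den q
    rwa [div_eq_iff hdq] at h
  have heq : q + (k:ℚ) = ((q.num + k * q.den : ℤ) : ℚ) / ((q.den : ℤ) : ℚ) := by
    field_simp
    push_cast; rw [hnum]; ring
  have h1 : IsCoprime (q.num) (q.den : ℤ) := by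
    rw [Int.isCoprime_iff_gcd_eq_one]; exact q.reduced
  have h2 : IsCoprime (q.num + (k:ℤ) * q.den) ((q.den : ℤ)) := h1.add_mul_right_left k
  have h3 := Rat.den_div_eq_of_coprime hb0 (Int.isCoprime_iff_gcd_eq_one.mp h2)
  rw [heq]
  exact_mod_cast h3

private lemma add_nat_mem {S : Set ℚ} (hadd : ∀ x ∈ S, ∀ y ∈ S, x + y ∈ S)
    (h1S : (1:ℚ) ∈ S) {x : ℚ} (hx : x ∈ S) (k : ℕ) : x + (k : ℚ) ∈ S := by
  induction k with
  | zero => simpa using hx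
  | succ k ih =>
      have h := hadd _ ih _ h1S
      have : x + (k:ℚ) + 1 = x + ((k+1 : ℕ) : ℚ) := by push_cast; ring
      rwa [this] at h

private lemma fg_of_bounded_den (S : Set ℚ) (hSpos : S ⊆ Set.Ioi 0)
    (hadd : ∀ x ∈ S, ∀ y ∈ S, x + y ∈ S) (h1S : (1:ℚ) ∈ S)
    {B : ℕ} (hB : 0 < B) (hden : ∀ x ∈ S, x.den ∣ B) :
    ∃ F : Finset ℚ, (F : Set ℚ) ⊆ S ∧
      (AddSubsemigroup.closure (F : Set ℚ) : Set ℚ) = S := by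
  classical
  have hBQ : ((B : ℚ)) ≠ 0 := Nat.cast_ne_zero.mpr hB.ne'
  -- every element of S times B is a natural number
  have hnat : ∀ x ∈ S, ∃ m : ℕ, (m : ℚ) = x * B := by
    intro x hx
    obtain ⟨c, hc⟩ := hden x hx
    have hxpos : (0:ℚ) < x := hSpos hx
    have hnum : (x.num : ℚ) = x * x.den := by
      have h := Rat.num_div_den x
      rwa [div_eq_iff (Nat.cast_ne_zero.mpr x.den_nz)] at h
    refine ⟨(x.num * c).toNat, ?_⟩
    have hnpos : 0 < x.num := Rat.num_pos.mpr hxpos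
    have hnn : (0:ℤ) ≤ x.num * c := by positivity
    rw [← Int.cast_natCast, Int.toNat_of_nonneg hnn]
    push_cast
    rw [hnum, hc]
    push_cast
    ring
  set T : Set ℕ := {n | ∃ x ∈ S, (n:ℚ) = x * B} with hT
  set U : ℕ → Set ℕ := fun r => {n | n ∈ T ∧ n % B = r} with hU
  set g : ℕ → ℚ := fun r => if h : (U r).Nonempty then ((sInf (U r) : ℕ) : ℚ) / B else 1
    with hg
  have hgS : ∀ r, g r ∈ S := by
    intro r
    by_cases h : (U r).Nonempty
    · have hgr : g r = ((sInf (U r) : ℕ) : ℚ) / B := dif_pos h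
      rw [hgr]
      obtain ⟨⟨x, hxS, hxm⟩, _⟩ := Nat.sInf_mem h
      have : ((sInf (U r) : ℕ) : ℚ) / B = x := by
        rw [hxm]; field_simp
      rwa [this]
    · have hgr : g r = 1 := dif_neg h
      rw [hgr]; exact h1S
  refine ⟨insert (1:ℚ) ((Finset.range B).image g), ?_, ?_⟩
  · intro y hy
    simp only [Finset.coe_insert, Set.mem_insert_iff, Finset.coe_image,
      Set.mem_image, Finset.mem_coe] at hy
    rcases hy with rfl | ⟨r, _, rfl⟩
    · exact h1S
    · exact hgS r
  · set F : Finset ℚ := insert (1:ℚ) ((Finset.range B).image g) with hF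
    have h1F : (1:ℚ) ∈ (F : Set ℚ) := by simp [hF]
    have h1cl : (1:ℚ) ∈ AddSubsemigroup.closure (F : Set ℚ) :=
      AddSubsemigroup.subset_closure h1F
    apply Set.eq_of_subset_of_subset
    · intro x hx
      induction hx using AddSubsemigroup.closure_induction with
      | mem y hy =>
          simp only [hF, Finset.coe_insert, Set.mem_insert_iff, Finset.coe_image,
            Set.mem_image, Finset.mem_coe] at hy
          rcases hy with rfl | ⟨r, _, rfl⟩
          · exact h1S
          · exact hgS r
      | add a b _ _ ha hb => exact hadd _ ha _ hb
    · intro x hx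
      obtain ⟨m, hm⟩ := hnat x hx
      set r := m % B with hr
      have hUr : (U r).Nonempty := ⟨m, ⟨⟨x, hx, hm⟩, rfl⟩⟩
      set s := sInf (U r) with hs
      obtain ⟨hsT, hsmod⟩ := Nat.sInf_mem hUr
      have hsle : s ≤ m := Nat.sInf_le ⟨⟨x, hx, hm⟩, rfl⟩
      have hdvd : B ∣ m - s := (Nat.modEq_iff_dvd' hsle).mp (hsmod.trans hr)
      obtain ⟨k, hk⟩ := hdvd
      have hmk : m = s + B * k := by omega
      have hgr : g r = ((s:ℕ):ℚ) / B := dif_pos hUr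
      have hxeq : x = g r + (k:ℚ) := by
        have hxm : x = (m:ℚ) / B := by
          rw [eq_div_iff hBQ]; exact hm.symm
        have hmQ : (m:ℚ) = (s:ℚ) + (B:ℚ) * k := by exact_mod_cast hmk
        rw [hxm, hgr, hmQ]
        field_simp
      rcases Nat.eq_zero_or_pos k with rfl | hkpos
      · have : x = g r := by simpa using hxeq
        rw [this]
        refine AddSubsemigroup.subset_closure ?_
        simp only [hF, Finset.coe_insert, Set.mem_insert_iff, Finset.coe_image,
          Set.mem_image, Finset.mem_coe, Finset.mem_range]
        exact Or.inr ⟨r, Nat.mod_lt _ hB, rfl⟩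
      · obtain ⟨k', rfl⟩ : ∃ k', k = k' + 1 := ⟨k - 1, by omega⟩
        have hgrcl : g r + 1 ∈ AddSubsemigroup.closure (F : Set ℚ) := by
          refine AddSubsemigroup.add_mem _ (AddSubsemigroup.subset_closure ?_) h1cl
          simp only [hF, Finset.coe_insert, Set.mem_insert_iff, Finset.coe_image,
            Set.mem_image, Finset.mem_coe]
          exact Or.inr ⟨r, Finset.mem_range.mpr (Nat.mod_lt _ hB), rfl⟩
        have := add_nat_mem (S := (AddSubsemigroup.closure (F : Set ℚ) : Set ℚ))
          (fun a ha b hb => AddSubsemigroup.add_mem _ ha hb) h1cl hgrcl k'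
        have heq2 : g r + 1 + (k' : ℚ) = g r + ((k' + 1 : ℕ) : ℚ) := by push_cast; ring
        rw [hxeq]
        rwa [heq2] at this

/-- If `S ⊆ ℚ₊` is a subsemigroup with smallest element `1` that is not finitely generated,
then for every `e ∈ ℕ` there is `n₀` with `|S ∩ (0,n)| ≥ e·(n - n₀)` for all `n ≥ n₀`;
in particular there is no `c > 0` with `|S ∩ (0,n)| < c·n` for all `n ≥ 1`. -/
theorem not_finitely_generated_growth
    (S : Set ℚ) (hSpos : S ⊆ Set.Ioi 0)
    (hadd : ∀ x ∈ S, ∀ y ∈ S, x + y ∈ S)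
    (h1S : (1 : ℚ) ∈ S) (hmin : ∀ x ∈ S, 1 ≤ x)
    (hnfg : ¬ ∃ F : Finset ℚ, (F : Set ℚ) ⊆ S ∧
      (AddSubsemigroup.closure (F : Set ℚ) : Set ℚ) = S) :
    (∀ e : ℕ, ∃ n₀ : ℕ, ∀ n : ℕ, n₀ ≤ n →
      ((e * (n - n₀) : ℕ) : ℕ∞) ≤ (S ∩ Set.Ioo 0 (n : ℚ)).encard) ∧
    ¬ ∃ c : ℝ, 0 < c ∧ ∀ n : ℕ, 1 ≤ n →
      (S ∩ Set.Ioo 0 (n : ℚ)).Finite ∧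
      ((S ∩ Set.Ioo 0 (n : ℚ)).ncard : ℝ) < c * n := by
  have hbig : ∀ B : ℕ, 0 < B → ∃ x ∈ S, ¬ x.den ∣ B := by
    intro B hB
    by_contra h
    push_neg at h
    exact hnfg (fg_of_bounded_den S hSpos hadd h1S hB h)
  have hlist : ∀ e : ℕ, ∃ l : List ℚ, l.length = e ∧ (∀ x ∈ l, x ∈ S) ∧
      (l.map Rat.den).Nodup := by
    intro e
    induction e with
    | zero => exact ⟨[], rfl, by simp, by simp⟩
    | succ e ih =>
        obtain ⟨l, hlen, hmem, hnd⟩ := ih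
        have hBpos : 0 < (l.map Rat.den).prod := by
          apply List.prod_pos
          intro a ha
          simp only [List.mem_map] at ha
          obtain ⟨x, _, rfl⟩ := ha
          exact x.pos
        obtain ⟨x, hxS, hxd⟩ := hbig _ hBpos
        refine ⟨x :: l, by simp [hlen], ?_, ?_⟩
        · intro y hy
          rcases List.mem_cons.mp hy with rfl | hy
          exacts [hxS, hmem y hy]
        · simp only [List.map_cons, List.nodup_cons]
          exact ⟨fun hmem' => hxd (List.dvd_prod hmem'), hnd⟩
  have hfoldr : ∀ (L : List ℚ), ∀ x ∈ L,
      ⌈x⌉₊ ≤ L.foldr (fun x m => max ⌈x⌉₊ m) 0 := by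
    intro L
    induction L with
    | nil => simp
    | cons a L ih =>
        intro x hx
        rcases List.mem_cons.mp hx with rfl | hx
        · exact le_max_left _ _
        · exact le_trans (ih x hx) (le_max_right _ _)
  have hgrowth : ∀ e : ℕ, ∃ n₀ : ℕ, ∀ n : ℕ, n₀ ≤ n →
      ((e * (n - n₀) : ℕ) : ℕ∞) ≤ (S ∩ Set.Ioo 0 (n : ℚ)).encard := by
    intro e
    obtain ⟨l, hlen, hmem, hnd⟩ := hlist e
    have hlnd : l.Nodup := hnd.of_map
    set n₀ : ℕ := l.foldr (fun x m => max ⌈x⌉₊ m) 0 with hn₀def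
    have hbound : ∀ x ∈ l, x ≤ (n₀ : ℚ) := by
      intro x hx
      refine le_trans (Nat.le_ceil x) ?_
      exact_mod_cast hfoldr l x hx
    refine ⟨n₀, ?_⟩
    intro n hn
    set Fn : Finset ℚ :=
      (l.toFinset ×ˢ Finset.range (n - n₀)).image (fun p => p.1 + (p.2 : ℚ)) with hFn
    have hsub : (Fn : Set ℚ) ⊆ S ∩ Set.Ioo 0 (n : ℚ) := by
      intro y hy
      simp only [hFn, Finset.coe_image, Set.mem_image, Finset.mem_coe,
        Finset.mem_product, Finset.mem_range, List.mem_toFinset] at hy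
      obtain ⟨⟨x, k⟩, ⟨hxl, hk⟩, rfl⟩ := hy
      have hxS : x ∈ S := hmem x hxl
      refine ⟨add_nat_mem hadd h1S hxS k, ?_, ?_⟩
      · have h1 : (1:ℚ) ≤ x := hmin x hxS
        have h2 : (0:ℚ) ≤ (k:ℚ) := Nat.cast_nonneg k
        linarith
      · have hkn : k + n₀ < n := by omega
        have hkQ : (k:ℚ) + (n₀:ℚ) < (n:ℚ) := by exact_mod_cast hkn
        have := hbound x hxl
        linarith
    have hcard : Fn.card = e * (n - n₀) := by
      rw [hFn, Finset.card_image_of_injOn, Finset.card_product,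
        List.toFinset_card_of_nodup hlnd, hlen, Finset.card_range]
      intro p hp q hq hpq
      simp only [Finset.mem_coe, Finset.mem_product, List.mem_toFinset,
        Finset.mem_range] at hp hq
      have hden : p.1.den = q.1.den := by
        have := congrArg Rat.den hpq
        rwa [den_add_nat, den_add_nat] at this
      have h1 : p.1 = q.1 :=
        List.inj_on_of_nodup_map hnd hp.1 hq.1 hden
      have h2 : p.2 = q.2 := by
        have hpq' : p.1 + (p.2 : ℚ) = q.1 + (q.2 : ℚ) := hpq
        rw [h1] at hpq'
        exact_mod_cast add_left_cancel hpq'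
      exact Prod.ext h1 h2
    calc ((e * (n - n₀) : ℕ) : ℕ∞) = (Fn.card : ℕ∞) := by rw [hcard]
      _ = (Fn : Set ℚ).encard := (Set.encard_coe_eq_coe_finsetCard Fn).symm
      _ ≤ (S ∩ Set.Ioo 0 (n : ℚ)).encard := Set.encard_mono hsub
  refine ⟨hgrowth, ?_⟩
  rintro ⟨c, hc, hcn⟩
  set e : ℕ := ⌈c⌉₊ + 1 with he
  obtain ⟨n₀, hn₀⟩ := hgrowth e
  set n : ℕ := n₀ + ⌈c * n₀⌉₊ + 1 with hn
  obtain ⟨hfin, hlt⟩ := hcn n (by omega)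
  have henc := hn₀ n (by omega)
  rw [← hfin.cast_ncard_eq] at henc
  have hcard : (e * (n - n₀) : ℕ) ≤ (S ∩ Set.Ioo 0 (n : ℚ)).ncard := by
    exact_mod_cast henc
  have hm : n - n₀ = ⌈c * n₀⌉₊ + 1 := by omega
  have h1 : c ≤ (⌈c⌉₊ : ℝ) := Nat.le_ceil c
  have h2 : c * n₀ ≤ (⌈c * n₀⌉₊ : ℝ) := by
    have := Nat.le_ceil (c * (n₀:ℝ))
    simpa using this
  have h3 : ((e * (n - n₀) : ℕ) : ℝ) ≤ ((S ∩ Set.Ioo 0 (n : ℚ)).ncard : ℝ) := by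
    exact_mod_cast hcard
  rw [hm] at h3
  have hnR : ((n:ℕ):ℝ) = (n₀:ℝ) + (⌈c * n₀⌉₊ : ℝ) + 1 := by
    rw [hn]; push_cast; ring
  rw [hnR] at hlt
  have h3' : ((⌈c⌉₊:ℝ) + 1) * ((⌈c * n₀⌉₊:ℝ) + 1) ≤
      ((S ∩ Set.Ioo 0 (n : ℚ)).ncard : ℝ) := by
    calc ((⌈c⌉₊:ℝ) + 1) * ((⌈c * n₀⌉₊:ℝ) + 1)
        = ((e * (⌈c * n₀⌉₊ + 1) : ℕ) : ℝ) := by rw [he]; push_cast; ring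
      _ ≤ _ := h3
  have h4 : (c + 1) * ((⌈c * n₀⌉₊:ℝ) + 1) ≤ ((⌈c⌉₊:ℝ) + 1) * ((⌈c * n₀⌉₊:ℝ) + 1) := by
    have hM : (0:ℝ) ≤ (⌈c * n₀⌉₊:ℝ) + 1 := by positivity
    nlinarith
  nlinarith [h2, h3', h4, hlt, hc]
end

section
/- Let S ⊆ ℚ₊ be the subsemigroup generated by 1 and a_i = 4^i + 2^{−i} for i ≥ 1. Then there exist constants such that (1/6)·n·√n < |S ∩ (0,n)| < (4/3)·n·√n for all sufficiently large n ∈ ℕ. -/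
open Finset

section aux

lemma two_pow_sum_inj' {T T' : Finset ℕ} (h : ∑ i ∈ T, 2 ^ i = ∑ i ∈ T', 2 ^ i) : T = T' := by
  have := congrArg (fun n : ℕ => n.bitIndices.toFinset) h
  simpa using this

lemma half_pow_sum_inj (k : ℕ) {T T' : Finset ℕ} (hT : T ⊆ range k) (hT' : T' ⊆ range k)
    (h : ∑ j ∈ T, ((1:ℚ)/2) ^ (j+1) = ∑ j ∈ T', ((1:ℚ)/2) ^ (j+1)) : T = T' := by
  have key : ∀ U : Finset ℕ, U ⊆ range k →
      (2:ℚ) ^ k * ∑ j ∈ U, ((1:ℚ)/2) ^ (j+1) = ((∑ j ∈ U, 2 ^ (k - 1 - j) : ℕ) : ℚ) := by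
    intro U hU
    rw [Finset.mul_sum]
    push_cast
    refine Finset.sum_congr rfl ?_
    intro j hj
    have hj' : j < k := mem_range.mp (hU hj)
    have : k - 1 - j + (j + 1) = k := by omega
    field_simp
    rw [show (2:ℚ)^k = 2^(k-1-j) * 2^(j+1) by rw [← pow_add, this], one_div_pow, mul_assoc,
      mul_one_div_cancel (by positivity), mul_one]
  have h2 := key T hT
  have h3 := key T' hT'
  rw [h] at h2
  have hnat : (∑ j ∈ T, 2 ^ (k - 1 - j) : ℕ) = ∑ j ∈ T', 2 ^ (k - 1 - j) := by
    exact_mod_cast h2.symm.trans h3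
  have injOn : ∀ U : Finset ℕ, U ⊆ range k →
      (∑ j ∈ U, 2 ^ (k - 1 - j) : ℕ) = ∑ i ∈ U.image (fun j => k - 1 - j), 2 ^ i := by
    intro U hU
    rw [Finset.sum_image]
    intro a ha b hb hab
    have := mem_range.mp (hU ha); have := mem_range.mp (hU hb); simp only at hab; omega
  rw [injOn T hT, injOn T' hT'] at hnat
  have himg := two_pow_sum_inj' hnat
  have back : ∀ U : Finset ℕ, U ⊆ range k →
      (U.image (fun j => k - 1 - j)).image (fun j => k - 1 - j) = U := by
    intro U hU
    rw [Finset.image_image]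
    rw [show ((fun j => k - 1 - j) ∘ (fun j => k - 1 - j)) = fun j : ℕ => k - 1 - (k - 1 - j) from rfl]
    have : ∀ j ∈ U, k - 1 - (k - 1 - j) = id j := by
      intro j hj; have := mem_range.mp (hU hj); simp; omega
    rw [Finset.image_congr this, Finset.image_id]
  rw [← back T hT, ← back T' hT', himg]

def Gset : Set ℚ := {1} ∪ Set.range (fun i : ℕ => (4 : ℚ) ^ (i + 1) + (1 / 2 : ℚ) ^ (i + 1))

lemma nat_mem_closure (c : ℕ) (hc : 1 ≤ c) : (c : ℚ) ∈ AddSubsemigroup.closure Gset := by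
  induction c with
  | zero => omega
  | succ k ih =>
    have h1 : (1:ℚ) ∈ AddSubsemigroup.closure Gset :=
      AddSubsemigroup.subset_closure (Or.inl rfl)
    rcases Nat.eq_zero_or_pos k with rfl | hk
    · simpa using h1
    · push_cast
      exact add_mem (ih hk) h1

lemma elt_mem_closure (c : ℕ) (hc : 1 ≤ c) (T : Finset ℕ) :
    (c : ℚ) + ∑ j ∈ T, ((4:ℚ)^(j+1) + (1/2:ℚ)^(j+1)) ∈ AddSubsemigroup.closure Gset := by
  induction T using Finset.induction with
  | empty => simpa using nat_mem_closure c hc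
  | @insert a s ha ih =>
    rw [Finset.sum_insert ha, ← add_assoc, add_comm (c:ℚ) _, add_assoc]
    exact add_mem (AddSubsemigroup.subset_closure (Or.inr ⟨a, rfl⟩)) ih

lemma upper_struct (n m : ℕ) (hm : (n:ℚ) ≤ 4 ^ (m+1)) {x : ℚ}
    (hx : x ∈ AddSubsemigroup.closure Gset) :
    0 < x ∧ (x < n → ∃ k : ℕ, x = (k : ℚ) / 2 ^ m) := by
  induction hx using AddSubsemigroup.closure_induction with
  | mem y hy =>
    rcases hy with hy | ⟨j, rfl⟩
    · rw [Set.mem_singleton_iff] at hy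
      subst hy
      refine ⟨one_pos, fun _ => ⟨2 ^ m, by rw [Nat.cast_pow, Nat.cast_ofNat]; field_simp⟩⟩
    · constructor
      · positivity
      · intro hlt
        have h4 : (4:ℚ) ^ (j+1) < 4 ^ (m+1) := by
          calc (4:ℚ) ^ (j+1) < (4:ℚ)^(j+1) + (1/2:ℚ)^(j+1) :=
                lt_add_of_pos_right _ (by positivity)
            _ < n := hlt
            _ ≤ _ := hm
        have hj : j + 1 ≤ m := by
          by_contra hc
          push_neg at hc
          exact absurd (pow_le_pow_right₀ (by norm_num : (1:ℚ) ≤ 4) hc) (not_le.mpr h4)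
        refine ⟨(4 ^ (j+1) * 2 ^ (j+1) + 1) * 2 ^ (m - (j+1)), ?_⟩
        have hsplit : m = (j+1) + (m - (j+1)) := by omega
        push_cast
        rw [eq_div_iff (by positivity)]
        rw [hsplit, pow_add]
        ring_nf
        rw [div_pow, one_pow]
        field_simp
        ring
        rw [show 1 + j + (m - (1 + j)) - (1 + j) = m - (1 + j) by omega]
  | add y z hy hz ihy ihz =>
    obtain ⟨hy0, hyk⟩ := ihy
    obtain ⟨hz0, hzk⟩ := ihz
    refine ⟨by positivity, fun hlt => ?_⟩
    obtain ⟨k₁, hk₁⟩ := hyk (by linarith)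
    obtain ⟨k₂, hk₂⟩ := hzk (by linarith)
    exact ⟨k₁ + k₂, by push_cast [hk₁, hk₂]; ring⟩

end aux

set_option maxHeartbeats 1600000 in
/-- **Example (n√n growth).** Let `S ⊆ ℚ₊` be the subsemigroup generated by `1` and
`aᵢ = 4^i + 2^{-i}` for `i ≥ 1`. Then `(1/6)·n·√n < |S ∩ (0,n)| < (4/3)·n·√n` for all
sufficiently large `n`. -/
theorem example_n_sqrt_n_growth
    (S : AddSubsemigroup ℚ)
    (hS : S = AddSubsemigroup.closure
      ({1} ∪ Set.range (fun i : ℕ => (4 : ℚ) ^ (i + 1) + (1 / 2 : ℚ) ^ (i + 1)))) :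
    ∃ N : ℕ, ∀ n : ℕ, N ≤ n →
      ((S : Set ℚ) ∩ Set.Ioo 0 (n : ℚ)).Finite ∧
      (1 / 6 : ℝ) * n * Real.sqrt n < (((S : Set ℚ) ∩ Set.Ioo 0 (n : ℚ)).ncard : ℝ) ∧
      (((S : Set ℚ) ∩ Set.Ioo 0 (n : ℚ)).ncard : ℝ) < (4 / 3 : ℝ) * n * Real.sqrt n := by
  have hS' : S = AddSubsemigroup.closure Gset := hS
  refine ⟨4096, fun n hn => ?_⟩
  set m := Nat.log 4 n with hm_def
  have hn0 : 0 < n := by omega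
  have h4m : 4 ^ m ≤ n := Nat.pow_log_le_self 4 hn0.ne'
  have h4m1 : n < 4 ^ (m + 1) := Nat.lt_pow_succ_log_self (by norm_num) n
  have hm6 : 6 ≤ m := by
    by_contra h
    push_neg at h
    have : 4 ^ (m+1) ≤ 4 ^ 6 := Nat.pow_le_pow_right (by norm_num) (by omega)
    omega
  -- upper bound containment
  have hsub : (S : Set ℚ) ∩ Set.Ioo 0 (n:ℚ) ⊆
      (fun k : ℕ => (k:ℚ)/2^m) '' (Set.Ico 1 (n * 2^m)) := by
    rintro x ⟨hxS, hx0, hxn⟩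
    rw [hS'] at hxS
    obtain ⟨-, hk⟩ := upper_struct n m (by exact_mod_cast h4m1.le) hxS
    obtain ⟨k, rfl⟩ := hk hxn
    refine ⟨k, ⟨?_, ?_⟩, rfl⟩
    · rcases Nat.eq_zero_or_pos k with rfl | h
      · simp at hx0
      · exact h
    · have h2 : (0:ℚ) < 2^m := by positivity
      rw [div_lt_iff₀ h2] at hxn
      have : (k:ℚ) < ((n * 2^m : ℕ) : ℚ) := by push_cast; linarith
      exact_mod_cast this
  have hfin : ((S : Set ℚ) ∩ Set.Ioo 0 (n:ℚ)).Finite :=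
    Set.Finite.subset ((Set.finite_Ico _ _).image _) hsub
  -- upper bound on the count
  have hcnt_le : ((S:Set ℚ) ∩ Set.Ioo 0 (n:ℚ)).ncard ≤ n * 2^m - 1 := by
    calc ((S:Set ℚ) ∩ Set.Ioo 0 (n:ℚ)).ncard
        ≤ ((fun k : ℕ => (k:ℚ)/2^m) '' (Set.Ico 1 (n * 2^m))).ncard :=
          Set.ncard_le_ncard hsub ((Set.finite_Ico _ _).image _)
      _ ≤ (Set.Ico 1 (n*2^m)).ncard := Set.ncard_image_le (Set.finite_Ico _ _)
      _ = n * 2^m - 1 := by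
          rw [← Finset.coe_Ico, Set.ncard_coe_finset, Nat.card_Ico]
  -- lower bound construction
  have hdiv3 : 3 * (4^m / 3) + 1 = 4 ^ m := by
    have hmod : 4 ^ m % 3 = 1 := by
      rw [Nat.pow_mod]; simp
    omega
  set C : ℕ := n - 4^m/3 - 3 with hC_def
  have hCn : 4^m/3 + 3 ≤ n := by
    have : 4^m/3 + 3 ≤ 4^m := by
      have h46 : 4^6 ≤ 4^m := Nat.pow_le_pow_right (by norm_num) hm6
      omega
    omega
  set F : ℕ × Finset ℕ → ℚ :=
    fun p => (p.1 : ℚ) + ∑ j ∈ p.2, ((4:ℚ)^(j+1) + (1/2:ℚ)^(j+1)) with hF_def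
  set D : Finset (ℕ × Finset ℕ) := Finset.Icc 1 C ×ˢ (range (m-1)).powerset with hD_def
  have hDcard : D.card = C * 2^(m-1) := by
    simp [hD_def, Nat.card_Icc, Finset.card_powerset, Finset.card_range]
  -- geometric sums
  have hBfull : ∀ k : ℕ, ∑ j ∈ range k, ((1:ℚ)/2)^(j+1) = 1 - (1/2)^k := by
    intro k
    induction k with
    | zero => simp
    | succ l ih => rw [Finset.sum_range_succ, ih]; ring
  have hAfull : ∀ k : ℕ, ∑ j ∈ range k, (4:ℚ)^(j+1) = (4 * (4:ℚ)^k - 4)/3 := by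
    intro k
    induction k with
    | zero => simp
    | succ l ih => rw [Finset.sum_range_succ, ih]; ring
  have hBsum : ∀ T : Finset ℕ, T ⊆ range (m-1) →
      0 ≤ (∑ j ∈ T, ((1:ℚ)/2)^(j+1)) ∧ (∑ j ∈ T, ((1:ℚ)/2)^(j+1)) < 1 := by
    intro T hT
    constructor
    · exact Finset.sum_nonneg fun j _ => by positivity
    · calc ∑ j ∈ T, ((1:ℚ)/2)^(j+1) ≤ ∑ j ∈ range (m-1), ((1:ℚ)/2)^(j+1) :=
            Finset.sum_le_sum_of_subset_of_nonneg hT (fun j _ _ => by positivity)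
        _ = 1 - (1/2)^(m-1) := hBfull (m-1)
        _ < 1 := by
            have : (0:ℚ) < (1/2)^(m-1) := by positivity
            linarith
  have hsum_le : ∀ T : Finset ℕ, T ⊆ range (m-1) →
      ∑ j ∈ T, ((4:ℚ)^(j+1) + (1/2:ℚ)^(j+1)) ≤ ((4^m/3 : ℕ) : ℚ) := by
    intro T hT
    have h1 : ∑ j ∈ T, ((4:ℚ)^(j+1) + (1/2:ℚ)^(j+1))
        ≤ ∑ j ∈ range (m-1), ((4:ℚ)^(j+1) + (1/2:ℚ)^(j+1)) :=
      Finset.sum_le_sum_of_subset_of_nonneg hT (fun j _ _ => by positivity)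
    simp only [Finset.sum_add_distrib] at h1
    rw [hAfull, hBfull] at h1
    have h4cast : ((4:ℚ)) ^ (m-1) * 4 = (4:ℚ)^m := by
      rw [← pow_succ]
      congr 1
      omega
    have hq : ((4^m/3 : ℕ) : ℚ) = ((4:ℚ)^m - 1)/3 := by
      have := hdiv3
      have hc : ((3 * (4^m/3) + 1 : ℕ) : ℚ) = ((4:ℚ)^m) := by
        rw [this]; push_cast; ring
      push_cast at hc
      linarith
    rw [hq, Finset.sum_add_distrib]
    have hpow : (0:ℚ) < (1/2)^(m-1) := by positivity
    linarith [h1, hpow, h4cast]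
  -- image is inside the set
  have himg : F '' ↑D ⊆ (S:Set ℚ) ∩ Set.Ioo 0 (n:ℚ) := by
    rintro x ⟨⟨c, T⟩, hp, rfl⟩
    rw [Finset.mem_coe, hD_def, Finset.mem_product] at hp
    obtain ⟨hc, hT⟩ := hp
    rw [Finset.mem_Icc] at hc
    rw [Finset.mem_powerset] at hT
    have hc1 : 1 ≤ c := hc.1
    refine ⟨?_, ?_, ?_⟩
    · rw [hS']
      exact elt_mem_closure c hc1 T
    · have h1 : (0:ℚ) < c := by exact_mod_cast hc1
      have h2 : 0 ≤ ∑ j ∈ T, ((4:ℚ)^(j+1) + (1/2:ℚ)^(j+1)) :=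
        Finset.sum_nonneg fun j _ => by positivity
      simp only [hF_def]
      linarith
    · have h2 := hsum_le T hT
      have hcQ : (c:ℚ) ≤ (C:ℚ) := by exact_mod_cast hc.2
      have hCQ : (C:ℚ) = (n:ℚ) - ((4^m/3 : ℕ):ℚ) - 3 := by
        have h1 : C = n - (4^m/3 + 3) := by omega
        rw [h1, Nat.cast_sub hCn]
        push_cast
        ring
      simp only [hF_def]
      have : (c:ℚ) + ∑ j ∈ T, ((4:ℚ)^(j+1) + (1/2:ℚ)^(j+1)) ≤ (n:ℚ) - 3 := by
        rw [hCQ] at hcQ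
        linarith
      linarith
  -- injectivity
  have hinj : Set.InjOn F ↑D := by
    rintro ⟨c, T⟩ hp ⟨c', T'⟩ hp' heq
    rw [Finset.mem_coe, hD_def, Finset.mem_product, Finset.mem_powerset] at hp hp'
    have hT := hp.2
    have hT' := hp'.2
    simp only [hF_def] at heq
    rw [Finset.sum_add_distrib] at heq
    rw [Finset.sum_add_distrib] at heq
    set B := ∑ j ∈ T, ((1:ℚ)/2)^(j+1) with hB
    set B' := ∑ j ∈ T', ((1:ℚ)/2)^(j+1) with hB'
    have hBb := hBsum T hT
    have hBb' := hBsum T' hT'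
    -- integer parts
    have hNA : ((c + ∑ j ∈ T, 4^(j+1) : ℕ) : ℚ) + B = ((c' + ∑ j ∈ T', 4^(j+1) : ℕ) : ℚ) + B' := by
      push_cast
      linarith [heq]
    set NA := (c + ∑ j ∈ T, 4^(j+1) : ℕ)
    set NA' := (c' + ∑ j ∈ T', 4^(j+1) : ℕ)
    have hNAeq : NA = NA' := by
      have l1 : (NA:ℚ) < (NA':ℚ) + 1 := by linarith [hBb.1, hBb.2, hBb'.1, hBb'.2]
      have l2 : (NA':ℚ) < (NA:ℚ) + 1 := by linarith [hBb.1, hBb.2, hBb'.1, hBb'.2]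
      have l1' : NA < NA' + 1 := by exact_mod_cast l1
      have l2' : NA' < NA + 1 := by exact_mod_cast l2
      omega
    have hBeq : B = B' := by
      rw [hNAeq] at hNA
      linarith
    have hTeq : T = T' := half_pow_sum_inj (m-1) hT hT' hBeq
    have hceq : c = c' := by
      subst hTeq
      simp only [NA, NA'] at hNAeq
      omega
    simp [hTeq, hceq]
  -- count lower bound
  have hge : C * 2^(m-1) ≤ ((S:Set ℚ) ∩ Set.Ioo 0 (n:ℚ)).ncard := by
    have h1 : (F '' ↑D).ncard = D.card := by
      rw [Set.ncard_image_of_injOn hinj, Set.ncard_coe_finset]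
    calc C * 2^(m-1) = D.card := hDcard.symm
      _ = (F '' ↑D).ncard := h1.symm
      _ ≤ _ := Set.ncard_le_ncard himg hfin
  -- final real arithmetic
  refine ⟨hfin, ?_, ?_⟩
  · -- lower bound
    set u := Real.sqrt n with hu_def
    have hu0 : 0 ≤ u := Real.sqrt_nonneg _
    have hu2 : u^2 = n := Real.sq_sqrt (by positivity)
    have hu64 : 64 ≤ u := by
      have h1 : Real.sqrt 4096 ≤ u := Real.sqrt_le_sqrt (by exact_mod_cast hn)
      have h2 : Real.sqrt 4096 = 64 := by
        rw [show (4096:ℝ) = 64^2 by norm_num]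
        exact Real.sqrt_sq (by norm_num)
      linarith
    set P : ℝ := 2^(m-1) with hP_def
    have hP0 : (0:ℝ) < P := by positivity
    have hPm : 4 * P^2 = (4:ℝ)^m := by
      rw [hP_def, ← pow_mul, show (4:ℝ) = 2^2 by norm_num, ← pow_mul, ← pow_add]
      congr 1
      omega
    have h4mR : (4:ℝ)^m ≤ n := by
      have : ((4^m : ℕ):ℝ) ≤ n := by exact_mod_cast h4m
      push_cast at this
      linarith
    have h4m1R : (n:ℝ) < 4 * (4:ℝ)^m := by
      have : ((n:ℕ):ℝ) < ((4^(m+1) : ℕ):ℝ) := by exact_mod_cast h4m1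
      push_cast at this
      rw [pow_succ] at this
      linarith
    have hcnt : ((C * 2^(m-1) : ℕ) : ℝ) ≤ (((S:Set ℚ) ∩ Set.Ioo 0 (n:ℚ)).ncard : ℝ) := by
      exact_mod_cast hge
    have hCR : ((C:ℕ):ℝ) = (n:ℝ) - ((4^m/3 : ℕ):ℝ) - 3 := by
      have h1 : C = n - (4^m/3 + 3) := by omega
      rw [h1, Nat.cast_sub hCn]
      push_cast
      ring
    have hqR : ((4^m/3 : ℕ):ℝ) = ((4:ℝ)^m - 1)/3 := by
      have hc : ((3 * (4^m/3) + 1 : ℕ) : ℝ) = ((4:ℝ)^m) := by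
        rw [hdiv3]; push_cast; ring
      push_cast at hc
      linarith
    have hcnt2 : ((n:ℝ) - ((4:ℝ)^m - 1)/3 - 3) * P ≤ (((S:Set ℚ) ∩ Set.Ioo 0 (n:ℚ)).ncard : ℝ) := by
      calc ((n:ℝ) - ((4:ℝ)^m - 1)/3 - 3) * P = ((C:ℕ):ℝ) * P := by rw [hCR, hqR]
        _ = ((C * 2^(m-1) : ℕ) : ℝ) := by push_cast [hP_def]; ring
        _ ≤ _ := hcnt
    -- now pure inequality
    have hP4 : u < 4 * P := by
      have h1 : u^2 < (4*P)^2 := by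
        have e : (4*P)^2 = 4*(4*P^2) := by ring
        rw [e, hPm, hu2]
        exact h4m1R
      have h2 := Real.sqrt_lt_sqrt (by positivity) h1
      rwa [Real.sqrt_sq hu0, Real.sqrt_sq (by positivity : (0:ℝ) ≤ 4*P)] at h2
    have hP2 : 2 * P ≤ u := by
      have h1 : (2*P)^2 ≤ u^2 := by
        have e : (2*P)^2 = 4*P^2 := by ring
        rw [e, hPm, hu2]
        exact h4mR
      have h2 := Real.sqrt_le_sqrt h1
      rwa [Real.sqrt_sq hu0, Real.sqrt_sq (by positivity : (0:ℝ) ≤ 2*P)] at h2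
    have e1 : (0:ℝ) ≤ P - u/4 := by linarith
    have e2 : P ≤ u/2 := by linarith
    have hb : (4/3)*(P^2 + P*u/4 + u^2/16) ≤ 7/12*u^2 := by
      nlinarith [mul_nonneg (by linarith : (0:ℝ) ≤ u/2 - P) (by linarith : (0:ℝ) ≤ u/2 + P),
        hP0.le, hu0, mul_nonneg hP0.le hu0]
    have h1 : 11/48*u^3 ≤ P*u^2 - (4/3)*P^3 := by
      nlinarith [mul_nonneg e1 (by linarith : (0:ℝ) ≤ u^2 - (4/3)*(P^2 + P*u/4 + u^2/16))]
    have hub : 64*u ≤ u*u := by nlinarith [hu64, hu0]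
    have hub2 : 64*(u*u) ≤ u*u*u := by nlinarith [hub, hu0, hu64]
    have key : (1/6:ℝ) * u^2 * u < ((u^2:ℝ) - (4*P^2 - 1)/3 - 3) * P := by
      nlinarith [h1, e2, hP0, hub, hub2]
    calc (1/6:ℝ) * n * u = (1/6) * u^2 * u := by rw [hu2]
      _ < ((u^2:ℝ) - (4*P^2 - 1)/3 - 3) * P := key
      _ = ((n:ℝ) - ((4:ℝ)^m - 1)/3 - 3) * P := by rw [hu2, hPm]
      _ ≤ _ := hcnt2
  · -- upper bound
    set u := Real.sqrt n with hu_def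
    have hu0 : 0 ≤ u := Real.sqrt_nonneg _
    have hu2 : u^2 = n := Real.sq_sqrt (by positivity)
    have h2mu : (2:ℝ)^m ≤ u := by
      have h4mR : ((2:ℝ)^m)^2 ≤ u^2 := by
        rw [hu2, ← pow_mul, show m*2 = 2*m from by omega, pow_mul]
        have : ((4^m : ℕ):ℝ) ≤ n := by exact_mod_cast h4m
        push_cast at this
        norm_num
        linarith
      nlinarith [pow_pos (by norm_num : (0:ℝ) < 2) m, hu0]
    have hcntR : (((S:Set ℚ) ∩ Set.Ioo 0 (n:ℚ)).ncard : ℝ) ≤ ((n * 2^m - 1 : ℕ):ℝ) := by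
      exact_mod_cast hcnt_le
    have h1 : ((n * 2^m - 1 : ℕ):ℝ) < (n:ℝ) * 2^m := by
      have hpos : 1 ≤ n * 2^m := Nat.mul_pos hn0 (Nat.two_pow_pos m)
      rw [Nat.cast_sub hpos]
      push_cast
      nlinarith [pow_pos (by norm_num : (0:ℝ) < 2) m]
    have hnpos : (0:ℝ) < n := by exact_mod_cast hn0
    have hupos : 0 < u := Real.sqrt_pos.mpr hnpos
    calc (((S:Set ℚ) ∩ Set.Ioo 0 (n:ℚ)).ncard : ℝ) ≤ ((n * 2^m - 1 : ℕ):ℝ) := hcntR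
      _ < (n:ℝ) * 2^m := h1
      _ ≤ (n:ℝ) * u := mul_le_mul_of_nonneg_left h2mu (by positivity)
      _ < (4/3:ℝ) * n * u := by nlinarith [mul_pos hnpos hupos]
end
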